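/- arXiv:1302.4494 — 5 statements merged into one kernel-verified Lean document; each statement's English description precedes it below -/
import Mathlib

section
/- Let w = ((i_1,j_1),…,(i_t,j_t)) be a standard word of total length r, and let γ̲_w = (γ^{(1)},…,γ^{(m)}) and f_w = (f_1,…,f_m) be the data obtained by the block decomposition of w. Then: (a) each γ^{(a)} is a nonempty partition, so γ̲_w is a sincere multipartition of r; (b) f_w is weakly decreasing, i.e. f_1 ≥ f_2 ≥ … ≥ f_m; (c) γ̲_w is a Kleshchev multipartition relative to f_w* = (−f_m,…,−f_1), that is, γ^{(a)}_{j + f_{m−a} − f_{m−a+1}} ≤ γ^{(a+1)}_j for all j ≥ 1 and all 1 ≤ a ≤ m−1 (convention: γ_j = 0 for j exceeding the number of parts). -/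
/-- An integral segment: a pair `(i, j)` of integers (proper when `i ≤ j`). -/
abbrev Seg := ℤ × ℤ

/-- The length `j - i + 1` of a segment. -/
def segLen (s : Seg) : ℤ := s.2 - s.1 + 1

/-- A standard word of total length `r`: a nonempty sequence of integral segments whose
upper endpoints weakly increase, such that lower endpoints weakly decrease on ties,
of total length `r`. -/
def IsStandardWord (r : ℕ) (w : List Seg) : Prop :=
  w ≠ [] ∧ (∀ s ∈ w, s.1 ≤ s.2) ∧
  w.Chain' (fun p q => p.2 ≤ q.2 ∧ (p.2 = q.2 → q.1 ≤ p.1)) ∧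
  (w.map segLen).sum = (r : ℤ)

/-- Number of further segments continuing the chain started at `p`:
consecutive upper endpoints increase by exactly 1 and lower endpoints strictly increase. -/
def chainLen : Seg → List Seg → ℕ
  | _, [] => 0
  | p, q :: rest => if q.2 = p.2 + 1 ∧ p.1 < q.1 then chainLen q rest + 1 else 0

/-- The block decomposition of a word into maximal chains. -/
def blocks : List Seg → List (List Seg)
  | [] => []
  | p :: rest =>
      (p :: rest.take (chainLen p rest)) :: blocks (rest.drop (chainLen p rest))
termination_by w => w.length
decreasing_by
  simp only [List.length_drop, List.length_cons]
  omega

/-- `γ̲_w`: the multipartition attached to a word by the block decomposition. -/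
def gammaOf (w : List Seg) : List (List ℕ) :=
  (blocks w).map (fun b => b.map (fun s => (segLen s).toNat))

/-- `f_w`: the tuple of upper endpoints of the first segments of the blocks,
in reversed block order (so `f_m = j_1`). -/
def fOf (w : List Seg) : List ℤ :=
  ((blocks w).map (fun b => (b.headI).2)).reverse

/-- A partition: a weakly decreasing list of positive integers. -/
def IsPartition (p : List ℕ) : Prop := p.Pairwise (· ≥ ·) ∧ ∀ x ∈ p, 0 < x

/-- The `j`-th part of a partition (1-based), with the convention `p_j = 0` for `j > ℓ(p)`. -/
def part (p : List ℕ) (j : ℕ) : ℕ := p.getD (j - 1) 0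

/-- The `a`-th entry of an integer tuple (1-based). -/
def fpart (f : List ℤ) (a : ℕ) : ℤ := f.getD (a - 1) 0

/-- The `a`-th component of a multipartition (1-based). -/
def mpart (γ : List (List ℕ)) (a : ℕ) : List ℕ := γ.getD (a - 1) []

/-- A multipartition of `r`: a tuple of partitions of total size `r`. -/
def IsMultipartition (r : ℕ) (γ : List (List ℕ)) : Prop :=
  (∀ p ∈ γ, IsPartition p) ∧ (γ.map List.sum).sum = r

/-- `f* = (−f_m, …, −f_1)`. -/
def fstar (f : List ℤ) : List ℤ := (f.map (fun x => -x)).reverse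

/-- Kleshchev multipartition relative to a weakly decreasing integer tuple `g`:
`γ^{(k)}_{j + g_k − g_{k+1}} ≤ γ^{(k+1)}_j` for all `j ≥ 1` and `1 ≤ k ≤ m−1`. -/
def IsKleshchev (g : List ℤ) (γ : List (List ℕ)) : Prop :=
  ∀ k j, 1 ≤ k → k ≤ g.length - 1 → 1 ≤ j →
    part (mpart γ k) (j + (fpart g k - fpart g (k + 1)).toNat) ≤ part (mpart γ (k + 1)) j

/-- Standard Kleshchev multipartition of `r` relative to `f`: conditions (SK1)–(SK3). -/
def IsStandardKleshchev (r : ℕ) (f : List ℤ) (γ : List (List ℕ)) : Prop :=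
  γ.length = f.length ∧
  IsMultipartition r γ ∧
  (∀ a, 1 ≤ a → a ≤ γ.length → mpart γ a ≠ []) ∧
  (∀ a, 1 ≤ a → a ≤ f.length - 1 →
    ((mpart γ a).length : ℤ) ≤ (fpart f a - fpart f (a + 1)) + 1 ∧
    part (mpart γ a) ((fpart f a - fpart f (a + 1)).toNat + 1) ≤ part (mpart γ (a + 1)) 1) ∧
  (∀ a, 1 ≤ a → a ≤ f.length - 1 →
    ((mpart γ a).length : ℤ) = fpart f a - fpart f (a + 1) →
    (part (mpart γ a) ((fpart f a - fpart f (a + 1)).toNat) : ℤ) ≤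
      (part (mpart γ (a + 1)) 1 : ℤ) - 1)

/-- `λ′_j = #{a : λ_a ≥ j}`. -/
def conjCount (p : List ℕ) (j : ℕ) : ℕ := (p.filter (fun x => j ≤ x)).length

/-- The conjugate partition, as a list of length `λ_1`. -/
def conjList (p : List ℕ) : List ℕ := (List.range p.headI).map (fun j0 => conjCount p (j0 + 1))

/-- `λ̲′ = (λ^{(m)′}, …, λ^{(1)′})`. -/
def conjMulti (γ : List (List ℕ)) : List (List ℕ) := (γ.map conjList).reverse

/-- Column residual segments of a single partition with parameter `fk`:
the `j`-th one is `(f_k + j − λ′_j, f_k + j − 1)`, for `j = 1, …, λ_1`. -/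
def colSegs (fk : ℤ) (p : List ℕ) : List Seg :=
  (List.range p.headI).map (fun (j0 : ℕ) =>
    (fk + (j0 : ℤ) + 1 - (conjCount p (j0 + 1) : ℤ), fk + (j0 : ℤ)))

/-- Column reading `s^c_{λ̲;f}`: components `k = m, …, 1`, columns `j = 1, …, λ^{(k)}_1`. -/
def colReading (f : List ℤ) (lam : List (List ℕ)) : List Seg :=
  (((lam.zip f).reverse).map (fun pk => colSegs pk.2 pk.1)).flatten

/-- Row residual segments of a single partition with parameter `fk`:
the `i`-th one is `(f_k + 1 − i, f_k + λ_i − i)`, for `i = 1, …, ℓ(λ)`. -/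
def rowSegs (fk : ℤ) (p : List ℕ) : List Seg :=
  (List.range p.length).map (fun (i0 : ℕ) =>
    (fk - (i0 : ℤ), fk + ((p.getD i0 0 : ℕ) : ℤ) - (i0 : ℤ) - 1))

/-- Row reading `s^r_{λ̲;f}`: components `k = 1, …, m`, rows `i = 1, …, ℓ(λ^{(k)})`. -/
def rowReading (f : List ℤ) (lam : List (List ℕ)) : List Seg :=
  ((lam.zip f).map (fun pk => rowSegs pk.2 pk.1)).flatten

/-- The inverse of a segment: `(i, j) ↦ (−j, −i)`. -/
def segInv (s : Seg) : Seg := (-s.2, -s.1)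

/-- The word attached to a tuple `f` and a multipartition `γ`:
for each `a = 1, …, m` and `b = 1, …, ℓ(γ^{(a)})` the segment
`(f_{m−a+1} − γ^{(a)}_b + b, f_{m−a+1} + b − 1)`. -/
def wordOf (f : List ℤ) (γ : List (List ℕ)) : List Seg :=
  ((List.range γ.length).map (fun a0 =>
    (List.range (γ.getD a0 []).length).map (fun b0 =>
      (f.getD (f.length - 1 - a0) 0 - ((γ.getD a0 []).getD b0 0 : ℤ) + (b0 + 1 : ℤ),
       f.getD (f.length - 1 - a0) 0 + (b0 : ℤ))))).flatten


/-- The `i`-th Drinfeld polynomial of a multiset of integral segments: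
`Q_i(x) = ∏_{b : |s_b| ≥ i} (1 − q^{2(j_b + 1 − i)} x)`. -/
noncomputable def drinfeld (q : ℂ) (s : Multiset Seg) (i : ℕ) : Polynomial ℂ :=
  ((s.filter (fun p => (i : ℤ) ≤ segLen p)).map
    (fun p => 1 - Polynomial.C (q ^ (2 * (p.2 + 1 - (i : ℤ)))) * Polynomial.X)).prod

/-- The column segments of the skew shape `λ/ν`: one segment
`(j − λ′_j, j − ν′_j − 1)` for each column `j` with `λ′_j > ν′_j`. -/
def skewSegList (lam nu : List ℕ) : List Seg :=
  ((List.range lam.headI).filter (fun j0 => conjCount nu (j0 + 1) < conjCount lam (j0 + 1))).map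
    (fun (j0 : ℕ) => ((j0 : ℤ) + 1 - (conjCount lam (j0 + 1) : ℤ),
      (j0 : ℤ) - (conjCount nu (j0 + 1) : ℤ)))

/-- A cell of the Young diagram of `λ` (1-based coordinates). -/
def IsYCell (lam : List ℕ) (a b : ℕ) : Prop := 1 ≤ a ∧ 1 ≤ b ∧ b ≤ part lam a

/-- A cell of the skew shape `λ/ν` (1-based coordinates). -/
def IsSkewCell (lam nu : List ℕ) (a b : ℕ) : Prop := 1 ≤ a ∧ part nu a < b ∧ b ≤ part lam a

instance (lam nu : List ℕ) (a b : ℕ) : Decidable (IsSkewCell lam nu a b) := by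
  unfold IsSkewCell; infer_instance

/-- A semistandard skew tableau of shape `λ/ν`, encoded as a function on 1-based coordinates
vanishing outside the shape, with positive entries weakly increasing along rows and strictly
increasing down columns. -/
def IsSSSkewTableau (lam nu : List ℕ) (T : ℕ → ℕ → ℕ) : Prop :=
  (∀ a b, ¬ IsSkewCell lam nu a b → T a b = 0) ∧
  (∀ a b, IsSkewCell lam nu a b → 1 ≤ T a b) ∧
  (∀ a b, IsSkewCell lam nu a b → IsSkewCell lam nu a (b + 1) → T a b ≤ T a (b + 1)) ∧
  (∀ a b, IsSkewCell lam nu a b → IsSkewCell lam nu (a + 1) b → T a b < T (a + 1) b)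

/-- Number of cells of `λ/ν` where `T` takes the value `i`. -/
def entryCount (lam nu : List ℕ) (T : ℕ → ℕ → ℕ) (i : ℕ) : ℕ :=
  ((Finset.range (lam.length + 1) ×ˢ Finset.range (lam.headI + 1)).filter
    (fun ab => IsSkewCell lam nu ab.1 ab.2 ∧ T ab.1 ab.2 = i)).card

/-- The reverse reading word of a skew tableau: each row right to left, rows top to bottom. -/
def rword (lam nu : List ℕ) (T : ℕ → ℕ → ℕ) : List ℕ :=
  ((List.range lam.length).map (fun a0 =>
    (List.range (part lam (a0 + 1) - part nu (a0 + 1))).map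
      (fun k => T (a0 + 1) (part lam (a0 + 1) - k)))).flatten

/-- A lattice word: in every prefix, `i` occurs at least as often as `i + 1`, for all `i ≥ 1`. -/
def IsLatticeWord (L : List ℕ) : Prop :=
  ∀ n i, 1 ≤ i → (L.take n).count (i + 1) ≤ (L.take n).count i

/-- `ρ_i = #{j : λ′_j − ν′_j ≥ i}`. -/
def rhoVal (lam nu : List ℕ) (i : ℕ) : ℕ :=
  ((Finset.range lam.headI).filter
    (fun j0 => i + conjCount nu (j0 + 1) ≤ conjCount lam (j0 + 1))).card

/-- `t^λ(a,b) = λ_1 + ⋯ + λ_{a−1} + b`: the row-by-row enumeration of the cells of `λ`. -/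
def rowIdx (lam : List ℕ) (a b : ℕ) : ℕ := (lam.take (a - 1)).sum + b

/-- `t_λ(a,b) = λ′_1 + ⋯ + λ′_{b−1} + a`: the column-by-column enumeration of the cells of `λ`. -/
def colIdx (lam : List ℕ) (a b : ℕ) : ℕ := ((conjList lam).take (b - 1)).sum + a

/-- A cell of the Young diagram of a multipartition: component `k`, row `a`, column `b`. -/
def IsMCell (lam : List (List ℕ)) (k a b : ℕ) : Prop :=
  1 ≤ k ∧ k ≤ lam.length ∧ IsYCell (lam.getD (k - 1) []) a b

/-- `t^{λ̲}`: row-by-row enumeration, components in order `1, …, m`. -/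
def mRowIdx (lam : List (List ℕ)) (k a b : ℕ) : ℕ :=
  ((lam.take (k - 1)).map List.sum).sum + rowIdx (lam.getD (k - 1) []) a b

/-- `t_{λ̲}`: column-by-column enumeration, components in order `m, …, 1`. -/
def mColIdx (lam : List (List ℕ)) (k a b : ℕ) : ℕ :=
  ((lam.drop k).map List.sum).sum + colIdx (lam.getD (k - 1) []) a b

def SegR (p q : Seg) : Prop := q.2 = p.2 + 1 ∧ p.1 < q.1
def SegStd (p q : Seg) : Prop := p.2 ≤ q.2 ∧ (p.2 = q.2 → q.1 ≤ p.1)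
def BRel (b c : List Seg) : Prop :=
  ∀ x ∈ b.getLast?, ∀ y ∈ c.head?, SegStd x y ∧ ¬ SegR x y

lemma chainLen_chain' (p : Seg) (l : List Seg) :
    (p :: l.take (chainLen p l)).Chain' SegR := by
  induction l generalizing p with
  | nil => simp [chainLen, List.Chain', List.isChain_singleton]
  | cons q rest ih =>
    by_cases h : q.2 = p.2 + 1 ∧ p.1 < q.1
    · simp only [chainLen, if_pos h, List.take_succ_cons, List.isChain_cons_cons]
      exact List.isChain_cons_cons.mpr ⟨h, ih q⟩
    · simp [chainLen, if_neg h, List.Chain', List.isChain_singleton]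

lemma chainLen_break (p : Seg) (l : List Seg) :
    ∀ x ∈ (p :: l.take (chainLen p l)).getLast?, ∀ q ∈ (l.drop (chainLen p l)).head?,
      ¬ SegR x q := by
  induction l generalizing p with
  | nil => simp
  | cons q' rest ih =>
    by_cases h : q'.2 = p.2 + 1 ∧ p.1 < q'.1
    · simp only [chainLen, if_pos h, List.take_succ_cons, List.drop_succ_cons]
      intro x hx
      rw [List.getLast?_cons_cons] at hx
      exact ih q' x hx
    · simp only [chainLen, if_neg h, List.take_zero, List.drop_zero]
      intro x hx q2 hq2
      simp only [List.getLast?_singleton, Option.mem_some_iff] at hx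
      simp only [List.head?_cons, Option.mem_some_iff] at hq2
      subst hx; subst hq2
      exact fun hr => h ⟨hr.1, hr.2⟩

lemma blocks_spec : ∀ (w : List Seg), w.Chain' SegStd →
    (blocks w).flatten = w ∧
    (∀ b ∈ blocks w, b ≠ [] ∧ b.Chain' SegR) ∧
    (blocks w).Chain' BRel := by
  intro w
  induction w using blocks.induct with
  | case1 => intro _; simp [blocks, List.Chain', List.isChain_nil]
  | case2 p rest ih =>
    intro hc
    have hrest : rest.Chain' SegStd := hc.tail
    have hdrop : (rest.drop (chainLen p rest)).Chain' SegStd := hrest.drop _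
    obtain ⟨ih1, ih2, ih3⟩ := ih hdrop
    rw [blocks]
    refine ⟨?_, ?_, ?_⟩
    · simp [ih1]
    · intro b hb
      rcases List.mem_cons.mp hb with rfl | hb
      · exact ⟨by simp, chainLen_chain' p rest⟩
      · exact ih2 b hb
    · refine List.isChain_cons.mpr ⟨?_, ih3⟩
      intro c hc'
      intro x hx y hy
      -- y is the head of the first block of `blocks (rest.drop _)`, which is head of drop
      have hy' : y ∈ (rest.drop (chainLen p rest)).head? := by
        rcases hd : rest.drop (chainLen p rest) with _ | ⟨q, tl⟩
        · rw [hd] at hc'; simp [blocks] at hc'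
        · rw [hd] at hc'
          rw [show blocks (q :: tl) = (q :: tl.take (chainLen q tl)) :: blocks (tl.drop (chainLen q tl)) from by rw [blocks]] at hc'
          simp only [List.head?_cons, Option.mem_some_iff] at hc' ⊢
          subst hc'; simpa using hy
      constructor
      · -- SegStd from chain' on w = block ++ drop
        have hsplit : p :: rest =
            (p :: rest.take (chainLen p rest)) ++ rest.drop (chainLen p rest) := by
          simp
        rw [hsplit] at hc
        exact (List.isChain_append.mp hc).2.2 x hx y hy'
      · exact chainLen_break p rest x hx y hy'

lemma chain_top : ∀ (b : List Seg), b.Chain' SegR →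
    ∀ i, i < b.length → (b.getD i default).2 = b.headI.2 + i := by
  intro b
  induction b with
  | nil => simp
  | cons p tl ih =>
    intro hb i hi
    cases i with
    | zero => simp
    | succ i =>
      cases tl with
      | nil => simp at hi
      | cons q tl' =>
        have h1 : SegR p q := (List.isChain_cons_cons.mp hb).1
        have h2 := ih (List.isChain_cons_cons.mp hb).2 i (by simpa using hi)
        simp only [List.getD_cons_succ, List.headI_cons] at h2 ⊢
        rw [h2, h1.1]
        push_cast; ring

lemma sum_toNat (l : List ℤ) (h : ∀ x ∈ l, 0 ≤ x) :
    ((l.map Int.toNat).sum : ℤ) = l.sum := by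
  induction l with
  | nil => simp
  | cons a t ih =>
    simp only [List.map_cons, List.sum_cons, Nat.cast_add]
    rw [Int.toNat_of_nonneg (h a List.mem_cons_self),
      ih (fun x hx => h x (List.mem_cons_of_mem a hx))]

lemma pair_fact (b c : List Seg) (hbne : b ≠ []) (hbch : b.Chain' SegR)
    (hcne : c ≠ []) (hbc : BRel b c) :
    b.headI.2 ≤ c.headI.2 ∧
    ∀ j, 1 ≤ j →
      (b.map (fun s => (segLen s).toNat)).getD (j + (c.headI.2 - b.headI.2).toNat - 1) 0 ≤
      (c.map (fun s => (segLen s).toNat)).getD (j - 1) 0 := by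
  set t := b.length with ht
  have htpos : 0 < t := List.length_pos_iff.mpr hbne
  set x := b.getLast hbne with hx
  have hxmem : x ∈ b.getLast? := by rw [List.getLast?_eq_getLast hbne]; rfl
  obtain ⟨y, c', rfl⟩ := List.exists_cons_of_ne_nil hcne
  have hstd : SegStd x y := (hbc x hxmem y (by simp)).1
  have hxe : x = b[t-1]'(by omega) := by rw [hx, List.getLast_eq_getElem]
  have hxtop : x.2 = b.headI.2 + ((t:ℤ) - 1) := by
    have := chain_top b hbch (t-1) (by omega)
    rw [List.getD_eq_getElem _ _ (by omega)] at this
    rw [hxe, this]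
    have : ((t - 1 : ℕ) : ℤ) = (t:ℤ) - 1 := by omega
    rw [this]
  have hd : (t:ℤ) - 1 ≤ y.2 - b.headI.2 := by
    have h1 := hstd.1
    omega
  have hh : b.headI.2 ≤ y.2 := by omega
  refine ⟨by simpa using hh, ?_⟩
  intro j hj
  simp only [List.headI_cons]
  set D := (y.2 - b.headI.2).toNat with hD
  have hDge : (t:ℤ) - 1 ≤ (D:ℤ) := by omega
  by_cases hcase : j + D - 1 < t
  · have hj1 : j = 1 := by omega
    have hDt : (D:ℤ) = (t:ℤ) - 1 := by omega
    have hyx : x.2 = y.2 := by omega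
    have hyi : y.1 ≤ x.1 := hstd.2 hyx
    have hidx : j + D - 1 = t - 1 := by omega
    rw [hidx, List.getD_eq_getElem _ _ (by simp; omega),
      List.getElem_map]
    subst hj1
    simp only [Nat.sub_self, List.map_cons, List.getD_cons_zero]
    have : b[t-1]'(by omega) = x := hxe.symm
    rw [this]
    have h1 : segLen x ≤ segLen y := by unfold segLen; omega
    omega
  · rw [List.getD_eq_default _ _ (by simpa using (by omega : t ≤ j + D - 1))]
    exact Nat.zero_le _


/-- For a standard word `w` of total length `r`, with `γ̲_w` and `f_w` from
the block decomposition: (a) every component of `γ̲_w` is a nonempty partition and `γ̲_w` is a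
(sincere) multipartition of `r`; (b) `f_w` is weakly decreasing; (c) `γ̲_w` is a Kleshchev
multipartition relative to `f_w* = (−f_m, …, −f_1)`. -/
theorem standard_word_gives_kleshchev (r : ℕ) (w : List Seg) (hw : IsStandardWord r w) :
    (∀ p ∈ gammaOf w, IsPartition p ∧ p ≠ []) ∧
    IsMultipartition r (gammaOf w) ∧
    (fOf w).Pairwise (· ≥ ·) ∧
    IsKleshchev (fstar (fOf w)) (gammaOf w) := by
  obtain ⟨hne, hproper, hchain, hsum⟩ := hw
  obtain ⟨hflat, hblk, hbrel⟩ := blocks_spec w hchain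
  have hmem : ∀ b ∈ blocks w, ∀ s ∈ b, s.1 ≤ s.2 := by
    intro b hb s hs
    refine hproper s ?_
    rw [← hflat]
    exact List.mem_flatten.mpr ⟨b, hb, hs⟩
  have hpart : ∀ p ∈ gammaOf w, IsPartition p ∧ p ≠ [] := by
    intro p hp
    simp only [gammaOf, List.mem_map] at hp
    obtain ⟨b, hb, rfl⟩ := hp
    obtain ⟨hbne, hbch⟩ := hblk b hb
    constructor
    · constructor
      · rw [← List.isChain_iff_pairwise, List.isChain_map]
        refine hbch.imp ?_
        intro p q h
        obtain ⟨h1, h2⟩ := h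
        simp only [ge_iff_le]
        unfold segLen
        omega
      · intro xx hxx
        simp only [List.mem_map] at hxx
        obtain ⟨s, hs, rfl⟩ := hxx
        have := hmem b hb s hs
        unfold segLen
        omega
    · simpa using hbne
  have hsum2 : ((gammaOf w).map List.sum).sum = r := by
    have h2 : ((gammaOf w).map List.sum).sum
        = (w.map (fun s => (segLen s).toNat)).sum := by
      rw [show gammaOf w
          = (blocks w).map (List.map (fun s => (segLen s).toNat)) from rfl,
        ← List.sum_flatten, ← List.map_flatten, hflat]
    have h3 : (((w.map (fun s => (segLen s).toNat)).sum : ℕ) : ℤ) = (r : ℤ) := by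
      rw [show w.map (fun s => (segLen s).toNat)
          = (w.map segLen).map Int.toNat from by rw [List.map_map]; rfl]
      rw [sum_toNat]
      · exact hsum
      · intro xx hxx
        simp only [List.mem_map] at hxx
        obtain ⟨s, hs, rfl⟩ := hxx
        have := hproper s hs
        unfold segLen
        omega
    rw [h2]
    exact_mod_cast h3
  have hhead : ∀ i, (h : i + 1 < (blocks w).length) →
      BRel ((blocks w)[i]'(by omega)) ((blocks w)[i+1]'h) := by
    have hcg := List.isChain_iff_getElem.mp hbrel
    intro i h
    simpa [List.get_eq_getElem] using hcg i (by omega)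
  have hpf : ∀ i, (h : i + 1 < (blocks w).length) →
      ((blocks w)[i]'(by omega)).headI.2 ≤ ((blocks w)[i+1]'h).headI.2 ∧
      ∀ j, 1 ≤ j →
        (((blocks w)[i]'(by omega)).map (fun s => (segLen s).toNat)).getD
          (j + (((blocks w)[i+1]'h).headI.2 - ((blocks w)[i]'(by omega)).headI.2).toNat - 1) 0 ≤
        (((blocks w)[i+1]'h).map (fun s => (segLen s).toNat)).getD (j - 1) 0 := by
    intro i h
    exact pair_fact _ _ (hblk _ (List.getElem_mem _)).1 (hblk _ (List.getElem_mem _)).2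
      (hblk _ (List.getElem_mem _)).1 (hhead i h)
  have hsort : (fOf w).Pairwise (· ≥ ·) := by
    haveI : IsTrans ℤ (fun a b : ℤ => b ≥ a) := ⟨fun _ _ _ h1 h2 => le_trans h1 h2⟩
    rw [fOf, List.pairwise_reverse, ← List.isChain_iff_pairwise,
      List.isChain_map, List.isChain_iff_getElem]
    intro i hi
    exact (hpf i (by simpa using hi)).1
  have hK : IsKleshchev (fstar (fOf w)) (gammaOf w) := by
    have hg : fstar (fOf w) = (blocks w).map (fun b => -(b.headI.2)) := by
      rw [fstar, fOf, List.map_reverse, List.reverse_reverse, List.map_map]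
      rfl
    intro k j hk1 hk2 hj
    rw [hg] at hk2
    simp only [List.length_map] at hk2
    have hkm : k < (blocks w).length := by omega
    have hk1m : k - 1 + 1 = k := by omega
    have hf1 : fpart (fstar (fOf w)) k
        = -(((blocks w)[k-1]'(by omega)).headI.2) := by
      rw [hg, fpart, List.getD_eq_getElem _ _ (by simp; omega), List.getElem_map]
    have hf2 : fpart (fstar (fOf w)) (k+1)
        = -(((blocks w)[k]'hkm).headI.2) := by
      rw [hg, fpart, List.getD_eq_getElem _ _ (by simp; omega), List.getElem_map]
      simp
    have hm1 : mpart (gammaOf w) k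
        = ((blocks w)[k-1]'(by omega)).map (fun s => (segLen s).toNat) := by
      rw [mpart, gammaOf, List.getD_eq_getElem _ _ (by simp; omega), List.getElem_map]
    have hm2 : mpart (gammaOf w) (k+1)
        = ((blocks w)[k]'hkm).map (fun s => (segLen s).toNat) := by
      rw [mpart, gammaOf, List.getD_eq_getElem _ _ (by simp; omega), List.getElem_map]
      simp
    rw [hf1, hf2, hm1, hm2, part, part]
    have hpair := hpf (k-1) (by omega)
    simp only [hk1m] at hpair
    rw [neg_sub_neg]
    exact hpair.2 j hj
  exact ⟨hpart, ⟨fun p hp => (hpart p hp).1, hsum2⟩, hsort, hK⟩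
end

section
/- For every standard word w of total length r, the column reading of the conjugate multipartition recovers w: s^c_{γ̲_w′ ; f_w} = w, where γ̲_w′ = (γ^{(m)′},…,γ^{(1)′}) is the multipartition of conjugate partitions taken in reversed order and f_w = (f_1,…,f_m). -/
section Aux

/-- Length of a segment as a natural number. -/
def lenNat (s : Seg) : ℕ := (segLen s).toNat

/-- The relation defining blocks. -/
def ChainRel (p q : Seg) : Prop := q.2 = p.2 + 1 ∧ p.1 < q.1

/-- Reading a single block. -/
def blockRead (b : List Seg) : List Seg :=
  colSegs b.headI.2 (conjList (b.map lenNat))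

lemma count_ge_iff (L : List ℕ) (hs : List.Pairwise (· ≥ ·) L) (a : ℕ) (ha : a < L.length)
    (j : ℕ) : a + 1 ≤ (L.filter (fun x => j ≤ x)).length ↔ j ≤ L[a] := by
  have hpg := List.pairwise_iff_getElem.mp hs
  constructor
  · intro h
    by_contra hj
    push_neg at hj
    have hsplit : L.filter (fun x => j ≤ x)
        = (L.take a).filter (fun x => j ≤ x) ++ (L.drop a).filter (fun x => j ≤ x) := by
      rw [← List.filter_append, List.take_append_drop]
    have hdrop : (L.drop a).filter (fun x => j ≤ x) = [] := by
      apply List.filter_eq_nil_iff.mpr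
      intro x hx
      obtain ⟨i, hi, hxe⟩ := List.mem_iff_getElem.mp hx
      rw [List.getElem_drop] at hxe
      have hlen : a + i < L.length := by
        rw [List.length_drop] at hi; omega
      have hle : x ≤ L[a] := by
        rcases Nat.eq_zero_or_pos i with h0 | h0
        · subst h0; simp only [Nat.add_zero] at hxe; omega
        · have := hpg a (a + i) ha hlen (by omega)
          omega
      simp only [decide_eq_true_eq]
      omega
    rw [hsplit, List.length_append, hdrop, List.length_nil] at h
    have h2 := List.length_filter_le (fun x => decide (j ≤ x)) (L.take a)
    rw [List.length_take] at h2
    omega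
  · intro hj
    have h1 : (L.take (a + 1)).filter (fun x => j ≤ x) = L.take (a + 1) := by
      apply List.filter_eq_self.mpr
      intro x hx
      obtain ⟨i, hi, hxe⟩ := List.mem_iff_getElem.mp hx
      rw [List.getElem_take] at hxe
      have hil : i < L.length := by
        rw [List.length_take] at hi; omega
      have hia : i ≤ a := by
        rw [List.length_take] at hi; omega
      have hle : L[a] ≤ x := by
        rcases eq_or_lt_of_le hia with h0 | h0
        · subst h0; omega
        · have := hpg i a hil ha h0
          omega
      simp only [decide_eq_true_eq]
      omega
    have hsplit : L.filter (fun x => j ≤ x)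
        = (L.take (a + 1)).filter (fun x => j ≤ x) ++ (L.drop (a + 1)).filter (fun x => j ≤ x) := by
      rw [← List.filter_append, List.take_append_drop]
    rw [hsplit, List.length_append, h1, List.length_take]
    omega

lemma range_filter_lt_length (n t : ℕ) (h : t ≤ n) :
    ((List.range n).filter (fun j0 => j0 < t)).length = t := by
  rw [show n = t + (n - t) by omega, List.range_add, List.filter_append, List.length_append]
  have h1 : (List.range t).filter (fun j0 => decide (j0 < t)) = List.range t := by
    apply List.filter_eq_self.mpr
    intro x hx
    simp [List.mem_range.mp hx]
  have h2 : ((List.range (n - t)).map (t + ·)).filter (fun j0 => decide (j0 < t)) = [] := by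
    apply List.filter_eq_nil_iff.mpr
    intro x hx
    simp only [List.mem_map, List.mem_range] at hx
    obtain ⟨y, _, rfl⟩ := hx
    simp
  rw [h1, h2, List.length_range, List.length_nil]
  omega

lemma conj_conj (L : List ℕ) (hs : List.Pairwise (· ≥ ·) L) (hpos : ∀ x ∈ L, 0 < x)
    (a : ℕ) (ha : a < L.length) : conjCount (conjList L) (a + 1) = L[a] := by
  unfold conjCount conjList
  rw [List.filter_map, List.length_map]
  simp only [Function.comp_def]
  have hcongr : ∀ j0 ∈ List.range L.headI,
      (decide (a + 1 ≤ conjCount L (j0 + 1))) = (decide (j0 < L[a])) := by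
    intro j0 _
    have := count_ge_iff L hs a ha (j0 + 1)
    unfold conjCount at *
    by_cases hc : j0 < L[a] <;> simp_all <;> omega
  rw [List.filter_congr hcongr]
  apply range_filter_lt_length
  -- L[a] ≤ L.headI
  cases L with
  | nil => simp at ha
  | cons x t =>
    rcases Nat.eq_zero_or_pos a with h0 | h0
    · subst h0; simp
    · have := List.pairwise_iff_getElem.mp hs 0 a (by simp) ha h0
      simpa using this

lemma chainRel_segLen {p q : Seg} (h : ChainRel p q) : segLen q ≤ segLen p := by
  obtain ⟨h1, h2⟩ := h
  unfold segLen
  omega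

lemma snd_getElem (b : List Seg) (hc : b.Chain' ChainRel) :
    ∀ a (ha : a < b.length), (b[a]).2 = b.headI.2 + (a : ℤ) := by
  induction b with
  | nil => intro a ha; simp at ha
  | cons p t ih =>
    intro a ha
    match a with
    | 0 => simp
    | Nat.succ a' =>
      cases t with
      | nil => simp at ha
      | cons q t' =>
        obtain ⟨hpq, hct⟩ := List.isChain_cons_cons.mp hc
        have := ih hct a' (by simpa using Nat.succ_lt_succ_iff.mp ha)
        simp only [List.getElem_cons_succ, List.headI] at this ⊢
        rw [this, hpq.1]
        push_cast
        ring

lemma blockRead_eq (b : List Seg) (hne : b ≠ []) (hc : b.Chain' ChainRel)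
    (hprop : ∀ s ∈ b, s.1 ≤ s.2) : blockRead b = b := by
  set L := b.map lenNat with hL
  have hLlen : L.length = b.length := List.length_map _
  have hpos : ∀ x ∈ L, 0 < x := by
    intro x hx
    obtain ⟨s, hs, rfl⟩ := List.mem_map.mp hx
    have := hprop s hs
    unfold lenNat segLen
    omega
  have hLsorted : List.Pairwise (· ≥ ·) L := by
    have hch : L.Chain' (· ≥ ·) := by
      rw [hL]
      exact (List.isChain_map lenNat).mpr (hc.imp (fun {p q} h => Int.toNat_le_toNat (chainRel_segLen h)))
    exact List.isChain_iff_pairwise.mp hch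
  have hcast : ∀ a (ha : a < b.length), (L[a]'(by omega) : ℤ) = segLen (b[a]) := by
    intro a ha
    simp only [hL, List.getElem_map]
    unfold lenNat
    have := hprop (b[a]) (List.getElem_mem _)
    unfold segLen at *
    omega
  -- decompose b
  obtain ⟨p, t, rfl⟩ := List.exists_cons_of_ne_nil hne
  have hheadpos : 0 < L.headI := by
    have : lenNat p ∈ L := by rw [hL]; simp
    have := hpos _ this
    rw [hL]
    simpa using this
  -- headI of conjList L = b.length
  have hconjhead : (conjList L).headI = (p :: t).length := by
    unfold conjList
    obtain ⟨m, hm⟩ : ∃ m, L.headI = m + 1 := ⟨L.headI - 1, by omega⟩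
    rw [hm, List.range_succ_eq_map, List.map_cons]
    show conjCount L 1 = _
    unfold conjCount
    rw [List.filter_eq_self.mpr (by intro x hx; have := hpos x hx; simp; omega)]
    rw [hLlen]
  unfold blockRead colSegs
  rw [← hL, hconjhead]
  apply List.ext_getElem
  · simp
  · intro a h1 h2
    rw [List.getElem_map, List.getElem_range]
    have haL : a < L.length := by
      rw [hLlen]; exact h2
    have hcc : conjCount (conjList L) (a + 1) = L[a] := conj_conj L hLsorted hpos a haL
    have hsnd := snd_getElem (p :: t) hc a h2
    have hfst := hcast a h2
    rw [hcc]
    have hL2 : ((p :: t)[a]).2 = p.2 + (a : ℤ) := by simpa using hsnd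
    unfold segLen at hfst
    have : (p :: t).headI.2 = p.2 := rfl
    ext
    · simp only [this]
      omega
    · simp only [this]
      omega

lemma chain'_take_chainLen (p : Seg) (rest : List Seg) :
    (p :: rest.take (chainLen p rest)).Chain' ChainRel := by
  induction rest generalizing p with
  | nil => simp [chainLen]; exact List.isChain_singleton p
  | cons q t ih =>
    unfold chainLen
    split
    · next h =>
      show (p :: q :: t.take (chainLen q t)).Chain' ChainRel
      exact List.isChain_cons_cons.mpr ⟨h, ih q⟩
    · simp; exact List.isChain_singleton p

lemma blocks_flatten (w : List Seg) (hprop : ∀ s ∈ w, s.1 ≤ s.2) :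
    ((blocks w).map blockRead).flatten = w := by
  induction w using blocks.induct with
  | case1 => simp [blocks]
  | case2 p rest ih =>
    rw [blocks]
    rw [List.map_cons, List.flatten_cons]
    have h1 : blockRead (p :: rest.take (chainLen p rest)) = p :: rest.take (chainLen p rest) := by
      apply blockRead_eq _ (by simp) (chain'_take_chainLen p rest)
      intro s hs
      apply hprop
      rcases List.mem_cons.mp hs with h | h
      · simp [h]
      · exact List.mem_cons_of_mem _ (List.mem_of_mem_take h)
    rw [h1, ih (fun s hs => hprop s (List.mem_cons_of_mem _ (List.mem_of_mem_drop hs)))]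
    simp

lemma colReading_blocks (w : List Seg) :
    colReading (fOf w) (conjMulti (gammaOf w)) = ((blocks w).map blockRead).flatten := by
  unfold colReading fOf conjMulti gammaOf
  rw [List.map_map]
  rw [← List.map_reverse, ← List.map_reverse, List.zip_map', ← List.map_reverse,
    List.reverse_reverse, List.map_map]
  rfl

end Aux


/-- For every standard word `w` of total length `r`, the column reading of the
conjugate multipartition `γ̲_w′ = (γ^{(m)′}, …, γ^{(1)′})` with respect to `f_w` recovers `w`. -/
theorem colReading_conj_gamma_eq (r : ℕ) (w : List Seg) (hw : IsStandardWord r w) :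
    colReading (fOf w) (conjMulti (gammaOf w)) = w := by
  rw [colReading_blocks]
  exact blocks_flatten w hw.2.1
end

section
/- For every standard word w of total length r, the multipartition γ̲_w is a standard Kleshchev multipartition of r relative to f_w* = (−f_m,…,−f_1); that is, γ̲_w satisfies conditions (SK1), (SK2) and (SK3) with f replaced by f_w*. -/
namespace SK2aux
open List

/-- The chain-extension step relation. -/
def stp (p q : Seg) : Prop := q.2 = p.2 + 1 ∧ p.1 < q.1

/-- The word chain relation. -/
def wc (p q : Seg) : Prop := p.2 ≤ q.2 ∧ (p.2 = q.2 → q.1 ≤ p.1)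

def lenNat (s : Seg) : ℕ := (segLen s).toNat

lemma chainLen_nil (p : Seg) : chainLen p [] = 0 := rfl

lemma chainLen_cons (p q : Seg) (t : List Seg) :
    chainLen p (q :: t) = if q.2 = p.2 + 1 ∧ p.1 < q.1 then chainLen q t + 1 else 0 := rfl

lemma blocks_nil : blocks [] = [] := by rw [blocks]

lemma blocks_cons (p : Seg) (rest : List Seg) :
    blocks (p :: rest) =
      (p :: rest.take (chainLen p rest)) :: blocks (rest.drop (chainLen p rest)) := by
  rw [blocks]

lemma blocks_flatten (w : List Seg) : (blocks w).flatten = w := by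
  induction w using blocks.induct with
  | case1 => simp [blocks_nil]
  | case2 p rest ih => rw [blocks_cons]; simp [ih]

lemma chain_spec (rest : List Seg) : ∀ p : Seg,
    List.Chain stp p (rest.take (chainLen p rest)) ∧
    ∀ q l, rest.drop (chainLen p rest) = q :: l →
      ∃ L, (p :: rest.take (chainLen p rest)).getLast? = some L ∧ ¬ stp L q := by
  induction rest with
  | nil =>
    intro p
    refine ⟨by simp [chainLen_nil, List.Chain], ?_⟩
    intro q l h; simp [chainLen_nil] at h
  | cons q t ih =>
    intro p
    by_cases h : q.2 = p.2 + 1 ∧ p.1 < q.1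
    · rw [chainLen_cons, if_pos h]
      constructor
      · rw [List.take_succ_cons]
        exact List.Chain.cons h (ih q).1
      · intro q' l hd
        rw [List.drop_succ_cons] at hd
        obtain ⟨L, hL, hns⟩ := (ih q).2 q' l hd
        exact ⟨L, by rw [List.take_succ_cons, List.getLast?_cons_cons]; exact hL, hns⟩
    · rw [chainLen_cons, if_neg h]
      constructor
      · simp [List.Chain]
      · intro q' l hd
        rw [List.drop_zero] at hd
        obtain ⟨rfl, rfl⟩ := List.cons.inj hd
        exact ⟨p, by simp, h⟩

lemma blocks_shape (w : List Seg) : ∀ b ∈ blocks w, ∃ p l, b = p :: l ∧ List.Chain stp p l := by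
  induction w using blocks.induct with
  | case1 => simp [blocks_nil]
  | case2 p rest ih =>
    rw [blocks_cons]
    rintro b hb
    rcases List.mem_cons.mp hb with rfl | hb
    · exact ⟨p, _, rfl, (chain_spec rest p).1⟩
    · exact ih b hb

/-- Boundary relation between consecutive blocks. -/
def Bnd (b b' : List Seg) : Prop :=
  ∀ L q, b.getLast? = some L → b'.head? = some q → wc L q ∧ ¬ stp L q

lemma blocks_head (v : List Seg) (b2 : List Seg) (h : (blocks v).head? = some b2) :
    ∃ q l', v = q :: l' ∧ b2.head? = some q := by
  cases v with
  | nil => rw [blocks_nil] at h; simp at h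
  | cons q l' =>
    rw [blocks_cons] at h
    simp only [List.head?_cons, Option.some.injEq] at h
    exact ⟨q, l', rfl, by rw [← h]; rfl⟩

lemma blocks_bnd (w : List Seg) (hw : List.Chain' wc w) : List.Chain' Bnd (blocks w) := by
  induction w using blocks.induct with
  | case1 => simp [blocks_nil, List.Chain']
  | case2 p rest ih =>
    rw [blocks_cons]; simp only [List.Chain', List.isChain_cons]
    have hsuf : List.Chain' wc (rest.drop (chainLen p rest)) :=
      List.IsChain.suffix hw ((List.drop_suffix _ rest).trans (List.suffix_cons p rest))
    refine ⟨?_, ih hsuf⟩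
    intro b2 hb2
    obtain ⟨q, l', hv, hb2h⟩ := blocks_head _ _ hb2
    intro L q' hL hq'
    rw [hb2h] at hq'
    obtain rfl : q = q' := by injection hq'
    obtain ⟨L', hL', hns⟩ := (chain_spec rest p).2 q l' hv
    rw [hL] at hL'
    obtain rfl : L = L' := by injection hL'
    have happ : p :: rest = (p :: rest.take (chainLen p rest)) ++ (q :: l') := by
      rw [← hv]; simp
    rw [happ] at hw
    have := (List.isChain_append.mp hw).2.2 L (by simpa using hL) q (by simp)
    exact ⟨this, hns⟩

lemma chain_last (l : List Seg) : ∀ p : Seg, List.Chain stp p l →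
    ∃ L, (p :: l).getLast? = some L ∧ L ∈ p :: l ∧ L.2 = p.2 + l.length := by
  induction l with
  | nil => intro p _; exact ⟨p, by simp, by simp, by simp⟩
  | cons q t ih =>
    intro p hc
    simp only [List.Chain, List.isChain_cons_cons] at hc
    obtain ⟨L, hL, hmem, h2⟩ := ih q hc.2
    refine ⟨L, by rw [List.getLast?_cons_cons]; exact hL, by simp [List.mem_cons] at hmem ⊢; tauto, ?_⟩
    rw [h2, hc.1.1]
    push_cast [List.length_cons]
    ring

lemma chain_len_decr (l : List Seg) : ∀ p : Seg, List.Chain stp p l →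
    (∀ s ∈ p :: l, s.1 ≤ s.2) →
    List.Chain' (fun a c => lenNat c ≤ lenNat a) (p :: l) := by
  induction l with
  | nil => intro p _ _; simp [List.Chain']
  | cons q t ih =>
    intro p hc hprop
    simp only [List.Chain, List.isChain_cons_cons] at hc
    simp only [List.Chain', List.isChain_cons_cons]
    refine ⟨?_, ih q hc.2 (fun s hs => hprop s (by simp [List.mem_cons] at hs ⊢; tauto))⟩
    have h1 := hprop p (by simp)
    have h2 := hprop q (by simp)
    obtain ⟨hj, hi⟩ := hc.1
    unfold lenNat segLen
    apply Int.toNat_le_toNat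
    omega

lemma block_partition (b : List Seg) (hb : ∃ p l, b = p :: l ∧ List.Chain stp p l)
    (hprop : ∀ s ∈ b, s.1 ≤ s.2) : IsPartition (b.map lenNat) := by
  obtain ⟨p, l, rfl, hc⟩ := hb
  constructor
  · rw [← List.isChain_iff_pairwise, List.isChain_map]
    exact chain_len_decr l p hc hprop
  · intro x hx
    simp only [List.mem_map] at hx
    obtain ⟨s, hs, rfl⟩ := hx
    have := hprop s hs
    unfold lenNat segLen
    omega

lemma part_last (l : List ℕ) (x : ℕ) (h : l.getLast? = some x) : part l l.length = x := by
  have hne : l ≠ [] := by rintro rfl; simp at h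
  have hlen : 0 < l.length := List.length_pos_iff.mpr hne
  rw [List.getLast?_eq_getElem?, List.getElem?_eq_getElem (by omega)] at h
  unfold part
  rw [List.getD_eq_getElem _ _ (by omega)]
  exact Option.some.inj h

lemma part_big (l : List ℕ) (j : ℕ) (h : l.length < j) : part l j = 0 :=
  List.getD_eq_default _ _ (by omega)

lemma pair_main (b b' : List Seg)
    (hb : ∃ p l, b = p :: l ∧ List.Chain stp p l)
    (hb' : ∃ p l, b' = p :: l)
    (hprop : ∀ s ∈ b, s.1 ≤ s.2) (hprop' : b'.headI.1 ≤ b'.headI.2)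
    (hbd : Bnd b b') :
    ((b.map lenNat).length : ℤ) ≤ (b'.headI.2 - b.headI.2) + 1 ∧
    part (b.map lenNat) ((b'.headI.2 - b.headI.2).toNat + 1) ≤ part (b'.map lenNat) 1 ∧
    (((b.map lenNat).length : ℤ) = b'.headI.2 - b.headI.2 →
      (part (b.map lenNat) (b'.headI.2 - b.headI.2).toNat : ℤ) ≤
        (part (b'.map lenNat) 1 : ℤ) - 1) := by
  obtain ⟨p, l, rfl, hc⟩ := hb
  obtain ⟨p', l', rfl⟩ := hb'
  simp only [List.headI] at hprop' ⊢
  obtain ⟨L, hL, hLmem, hL2⟩ := chain_last l p hc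
  obtain ⟨hwc, hns⟩ := hbd L p' hL (by simp)
  have hLprop := hprop L hLmem
  -- part of b at its own length is lenNat L
  have hplast : part ((p :: l).map lenNat) ((p :: l).length) = lenNat L := by
    have : ((p :: l).map lenNat).getLast? = some (lenNat L) := by
      rw [List.getLast?_map, hL]; rfl
    have := part_last _ _ this
    rwa [List.length_map] at this
  have hp1 : part ((p' :: l').map lenNat) 1 = lenNat p' := by
    simp [part, lenNat]
  have hlen : ((p :: l).map lenNat).length = l.length + 1 := by simp
  set d : ℤ := p'.2 - p.2 with hd
  have hdl : (l.length : ℤ) ≤ d := by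
    have := hwc.1
    omega
  have hd0 : 0 ≤ d := le_trans (by positivity) hdl
  refine ⟨?_, ?_, ?_⟩
  · rw [hlen]; push_cast; omega
  · by_cases hcase : (l.length : ℤ) + 1 ≤ d
    · rw [part_big _ _ (by rw [hlen]; omega)]
      exact Nat.zero_le _
    · have hde : d = (l.length : ℤ) := by omega
      have hidx : d.toNat + 1 = (p :: l).length := by simp [hde]
      rw [hidx, hplast, hp1]
      have htie : L.2 = p'.2 := by omega
      have hle := hwc.2 htie
      unfold lenNat
      apply Int.toNat_le_toNat
      unfold segLen
      omega
  · intro heq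
    rw [hlen] at heq
    have hidx : d.toNat = (p :: l).length := by simp; omega
    rw [hidx, hplast, hp1]
    have hp2 : p'.2 = L.2 + 1 := by omega
    have hi : p'.1 ≤ L.1 := by
      by_contra hlt
      exact hns ⟨hp2, by omega⟩
    have e1 : (lenNat L : ℤ) = segLen L := Int.toNat_of_nonneg (by unfold segLen; omega)
    have e2 : (lenNat p' : ℤ) = segLen p' := Int.toNat_of_nonneg (by unfold segLen; omega)
    rw [e1, e2]
    unfold segLen
    omega

end SK2aux

namespace SK2aux

lemma fstar_fOf (w : List Seg) :
    fstar (fOf w) = (blocks w).map (fun b => -(b.headI.2)) := by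
  simp [fstar, fOf, List.map_reverse, List.reverse_reverse, List.map_map, Function.comp]

lemma fpart_eq (w : List Seg) (a0 : ℕ) (h : a0 < (blocks w).length) :
    fpart (fstar (fOf w)) (a0 + 1) = -(((blocks w).getD a0 []).headI.2) := by
  rw [fstar_fOf]
  unfold fpart
  simp only [Nat.add_sub_cancel]
  rw [List.getD_eq_getElem _ _ (by simpa using h), List.getElem_map,
      List.getD_eq_getElem _ _ h]

lemma mpart_eq (w : List Seg) (a0 : ℕ) :
    mpart (gammaOf w) (a0 + 1) = ((blocks w).getD a0 []).map lenNat := by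
  unfold mpart gammaOf lenNat
  simp only [Nat.add_sub_cancel, List.getD_eq_getElem?_getD, List.getElem?_map]
  cases (blocks w)[a0]? <;> simp

end SK2aux

/-- For every standard word `w` of total length `r`, the multipartition `γ̲_w`
is a standard Kleshchev multipartition of `r` relative to `f_w* = (−f_m, …, −f_1)`, i.e. it
satisfies (SK1), (SK2) and (SK3). -/
theorem gammaOf_isStandardKleshchev (r : ℕ) (w : List Seg) (hw : IsStandardWord r w) :
    IsStandardKleshchev r (fstar (fOf w)) (gammaOf w) := by
  obtain ⟨hne, hprop, hch, hsum⟩ := hw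
  have hglen : (fstar (fOf w)).length = (blocks w).length := by
    simp [fstar, fOf]
  have hγlen : (gammaOf w).length = (blocks w).length := by simp [gammaOf]
  have hmemw : ∀ b ∈ blocks w, ∀ s ∈ b, s.1 ≤ s.2 := by
    intro b hb s hs
    exact hprop s (by rw [← SK2aux.blocks_flatten w]; exact List.mem_flatten.mpr ⟨b, hb, hs⟩)
  have hgetD : ∀ a0, a0 < (blocks w).length → (blocks w).getD a0 [] ∈ blocks w := by
    intro a0 h; rw [List.getD_eq_getElem _ _ h]; exact List.getElem_mem h
  have hpair : ∀ a0, a0 + 1 < (blocks w).length →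
      SK2aux.Bnd ((blocks w).getD a0 []) ((blocks w).getD (a0 + 1) []) := by
    intro a0 h
    have hc := SK2aux.blocks_bnd w hch
    simp only [List.Chain'] at hc; rw [List.isChain_iff_getElem] at hc
    rw [List.getD_eq_getElem _ _ (show a0 < _ by omega), List.getD_eq_getElem _ _ h]
    exact hc a0 (by omega)
  -- common setup for the two boundary conditions
  have hsetup : ∀ a0, a0 + 1 < (blocks w).length →
      ∃ b b', b = (blocks w).getD a0 [] ∧ b' = (blocks w).getD (a0 + 1) [] ∧
        mpart (gammaOf w) (a0 + 1) = b.map SK2aux.lenNat ∧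
        mpart (gammaOf w) (a0 + 1 + 1) = b'.map SK2aux.lenNat ∧
        fpart (fstar (fOf w)) (a0 + 1) - fpart (fstar (fOf w)) (a0 + 1 + 1) =
          b'.headI.2 - b.headI.2 ∧
        ((b.map SK2aux.lenNat).length : ℤ) ≤ (b'.headI.2 - b.headI.2) + 1 ∧
        part (b.map SK2aux.lenNat) ((b'.headI.2 - b.headI.2).toNat + 1) ≤
          part (b'.map SK2aux.lenNat) 1 ∧
        (((b.map SK2aux.lenNat).length : ℤ) = b'.headI.2 - b.headI.2 →
          (part (b.map SK2aux.lenNat) (b'.headI.2 - b.headI.2).toNat : ℤ) ≤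
            (part (b'.map SK2aux.lenNat) 1 : ℤ) - 1) := by
    intro a0 hlt
    refine ⟨_, _, rfl, rfl, SK2aux.mpart_eq w a0, SK2aux.mpart_eq w (a0 + 1), ?_, ?_⟩
    · rw [SK2aux.fpart_eq w a0 (by omega), SK2aux.fpart_eq w (a0 + 1) hlt]; ring
    · have hsh := SK2aux.blocks_shape w _ (hgetD a0 (by omega))
      obtain ⟨p', l', hb', -⟩ := SK2aux.blocks_shape w _ (hgetD (a0 + 1) hlt)
      have hhd : ((blocks w).getD (a0 + 1) []).headI.1 ≤ ((blocks w).getD (a0 + 1) []).headI.2 := by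
        rw [hb']
        simp only [List.headI]
        exact hmemw _ (hgetD (a0 + 1) hlt) p' (by rw [hb']; simp)
      have hmain := SK2aux.pair_main _ _ hsh ⟨p', l', hb'⟩
        (hmemw _ (hgetD a0 (by omega))) hhd (hpair a0 hlt)
      exact ⟨hmain.1, hmain.2.1, hmain.2.2⟩
  refine ⟨by rw [hγlen, hglen], ⟨?_, ?_⟩, ?_, ?_, ?_⟩
  · intro p hp
    simp only [gammaOf, List.mem_map] at hp
    obtain ⟨b, hb, rfl⟩ := hp
    exact SK2aux.block_partition b (SK2aux.blocks_shape w b hb) (hmemw b hb)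
  · have h1 : ((gammaOf w).map List.sum).sum = (w.map SK2aux.lenNat).sum := by
      rw [← List.sum_flatten]
      unfold gammaOf
      rw [← List.map_flatten, SK2aux.blocks_flatten]
      rfl
    rw [h1]
    have h2 : ((w.map SK2aux.lenNat).sum : ℤ) = (r : ℤ) := by
      rw [Nat.cast_list_sum, List.map_map, ← hsum]
      apply congrArg
      apply List.map_congr_left
      intro s hs
      have hps := hprop s hs
      simp only [Function.comp, SK2aux.lenNat]
      have : 0 ≤ segLen s := by unfold segLen; omega
      exact Int.toNat_of_nonneg this
    exact_mod_cast h2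
  · intro a ha1 ha2
    obtain ⟨a0, rfl⟩ : ∃ a0, a = a0 + 1 := ⟨a - 1, by omega⟩
    rw [SK2aux.mpart_eq]
    have hlt : a0 < (blocks w).length := by rw [hγlen] at ha2; omega
    obtain ⟨p, l, hb, -⟩ := SK2aux.blocks_shape w _ (hgetD a0 hlt)
    rw [hb]
    simp
  · intro a ha1 ha2
    obtain ⟨a0, rfl⟩ : ∃ a0, a = a0 + 1 := ⟨a - 1, by omega⟩
    have hlt : a0 + 1 < (blocks w).length := by rw [hglen] at ha2; omega
    obtain ⟨b, b', -, -, hm1, hm2, hf, h1, h2, h3⟩ := hsetup a0 hlt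
    rw [hm1, hm2, hf]
    exact ⟨h1, h2⟩
  · intro a ha1 ha2
    obtain ⟨a0, rfl⟩ : ∃ a0, a = a0 + 1 := ⟨a - 1, by omega⟩
    have hlt : a0 + 1 < (blocks w).length := by rw [hglen] at ha2; omega
    obtain ⟨b, b', -, -, hm1, hm2, hf, h1, h2, h3⟩ := hsetup a0 hlt
    rw [hm1, hm2, hf]
    exact h3
end

section
/- For each weakly decreasing integer tuple f = (f_1,…,f_m), the map w ↦ γ̲_w is a bijection from the set of standard words w of total length r with f_w = f onto the set 𝒦^s_{f*}(r) of standard Kleshchev multipartitions of r relative to f* = (−f_m,…,−f_1). -/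
section Aux

def stp (p q : Seg) : Prop := q.2 = p.2 + 1 ∧ p.1 < q.1

lemma chainLen_le (p : Seg) (rest : List Seg) : chainLen p rest ≤ rest.length := by
  induction rest generalizing p with
  | nil => simp [chainLen]
  | cons q t ih =>
    simp only [chainLen, List.length_cons]
    split
    · exact Nat.succ_le_succ (ih q)
    · omega

lemma chain_take (p : Seg) (rest : List Seg) :
    List.Chain stp p (rest.take (chainLen p rest)) := by
  induction rest generalizing p with
  | nil => simp [chainLen, List.Chain]
  | cons q t ih =>
    simp only [chainLen]
    split
    · rename_i h
      rw [List.take_succ_cons]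
      exact List.Chain.cons h (ih q)
    · simp [List.Chain]

lemma chain_break (p : Seg) (rest : List Seg) :
    ∀ q ∈ (rest.drop (chainLen p rest)).head?,
      ¬ stp ((rest.take (chainLen p rest)).getLastD p) q := by
  induction rest generalizing p with
  | nil => simp
  | cons q t ih =>
    simp only [chainLen]
    split
    · rename_i h
      rw [List.drop_succ_cons, List.take_succ_cons, List.getLastD_cons]
      exact ih q
    · rename_i h
      simpa [stp] using h

lemma chainLen_eq (p : Seg) (t rest : List Seg) (hc : List.Chain stp p t)
    (hb : ∀ q ∈ rest.head?, ¬ stp (t.getLastD p) q) : chainLen p (t ++ rest) = t.length := by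
  induction t generalizing p with
  | nil =>
    cases rest with
    | nil => simp [chainLen]
    | cons q t' =>
      have := hb q (by simp)
      simp only [List.nil_append, chainLen, List.length_nil]
      rw [if_neg]
      simpa [stp] using this
  | cons a t' ih =>
    rcases List.chain_cons.mp hc with ⟨h1, h2⟩
    simp only [List.cons_append, chainLen, List.length_cons]
    rw [if_pos (by simpa [stp] using h1)]
    rw [List.getLastD_cons] at hb
    have h3 : t'.append rest = t' ++ rest := rfl
    rw [ih a h2 hb]

lemma blocks_cons' (p : Seg) (t rest : List Seg) (hc : List.Chain stp p t)
    (hb : ∀ q ∈ rest.head?, ¬ stp (t.getLastD p) q) :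
    blocks (p :: (t ++ rest)) = (p :: t) :: blocks rest := by
  rw [blocks, chainLen_eq p t rest hc hb, List.take_left, List.drop_left]

lemma blocks_rec {P : List Seg → Prop} (h0 : P [])
    (h1 : ∀ p rest, P (rest.drop (chainLen p rest)) → P (p :: rest)) : ∀ w, P w := by
  have key : ∀ n w, w.length ≤ n → P w := by
    intro n
    induction n with
    | zero => intro w hw; rw [List.length_eq_zero_iff.mp (Nat.le_zero.mp hw)]; exact h0
    | succ n ih =>
      intro w hw
      match w with
      | [] => exact h0
      | p :: rest =>
        refine h1 p rest (ih _ ?_)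
        simp only [List.length_drop]
        simp only [List.length_cons] at hw
        omega
  exact fun w => key w.length w le_rfl

lemma flatten_blocks (w : List Seg) : (blocks w).flatten = w := by
  induction w using blocks_rec with
  | h0 => simp [blocks]
  | h1 p rest ih => rw [blocks]; simp [ih]

def brk (B C : List Seg) : Prop := ∀ p ∈ B.getLast?, ∀ q ∈ C.head?, ¬ stp p q

def BlockyP (L : List (List Seg)) : Prop :=
  (∀ B ∈ L, B ≠ [] ∧ B.Chain' stp) ∧ L.Chain' brk

lemma head?_flatten_eq (L : List (List Seg)) (h : ∀ B ∈ L, B ≠ []) :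
    ∀ C ∈ L.head?, L.flatten.head? = C.head? := by
  cases L with
  | nil => simp
  | cons C L' =>
    intro C' hC'
    simp only [List.head?_cons, Option.mem_def, Option.some.injEq] at hC'
    subst hC'
    rw [List.flatten_cons, List.head?_append]
    rcases List.exists_cons_of_ne_nil (h C (by simp)) with ⟨a, t, rfl⟩
    simp

lemma blockyP_blocks (w : List Seg) : BlockyP (blocks w) := by
  induction w using blocks_rec with
  | h0 => exact ⟨by simp [blocks], by simp [blocks, List.Chain']⟩
  | h1 p rest ih =>
    rw [blocks]
    constructor
    · intro B hB
      rcases List.mem_cons.mp hB with rfl | hB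
      · exact ⟨by simp, chain_take p rest⟩
      · exact ih.1 B hB
    · rw [List.Chain', List.isChain_cons]
      refine ⟨?_, ih.2⟩
      intro C hC
      intro p' hp' q hq
      have hfl : (blocks (rest.drop (chainLen p rest))).flatten.head? = C.head? :=
        head?_flatten_eq _ (fun B hB => (ih.1 B hB).1) C hC
      rw [flatten_blocks] at hfl
      have hq' : q ∈ (rest.drop (chainLen p rest)).head? := by rw [hfl]; exact hq
      have := chain_break p rest q hq'
      rw [List.getLast?_cons] at hp'
      simp only [Option.mem_def, Option.some.injEq] at hp'
      subst hp'
      simpa [List.getLastD_eq_getLast?] using this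

lemma blocks_flatten_of_blockyP (L : List (List Seg)) (h : BlockyP L) :
    blocks L.flatten = L := by
  induction L with
  | nil => simp [blocks]
  | cons B rest ih =>
    rcases List.exists_cons_of_ne_nil (h.1 B (by simp)).1 with ⟨p, t, rfl⟩
    rw [List.flatten_cons, List.cons_append]
    have hch : List.Chain stp p t := (h.1 (p :: t) (by simp)).2
    rw [blocks_cons' p t rest.flatten hch]
    · rw [ih ⟨fun B hB => h.1 B (by simp [hB]), (List.isChain_cons.mp h.2).2⟩]
    · intro q hq
      cases rest with
      | nil => simp at hq
      | cons C rest' =>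
        have hbrk : brk (p :: t) C := (List.isChain_cons.mp h.2).1 C (by simp)
        have hCne := (h.1 C (by simp)).1
        have : (C :: rest').flatten.head? = C.head? :=
          head?_flatten_eq _ (fun B hB => (h.1 B (by simp [hB])).1) C (by simp)
        rw [this] at hq
        have hlast : (p :: t).getLast? = some (t.getLastD p) := by
          rw [List.getLast?_cons]
          simp [List.getLastD_eq_getLast?]
        exact hbrk _ hlast q hq

def blockOf (h : ℤ) (g : List ℕ) : List Seg :=
  (List.range g.length).map (fun (b0 : ℕ) => (h + (b0:ℤ) + 1 - (g.getD b0 0 : ℤ), h + (b0:ℤ)))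

lemma blockOf_nil (h : ℤ) : blockOf h [] = [] := by simp [blockOf]

lemma blockOf_cons (h : ℤ) (c : ℕ) (g : List ℕ) :
    blockOf h (c :: g) = (h + 1 - (c:ℤ), h) :: blockOf (h + 1) g := by
  unfold blockOf
  rw [List.length_cons, List.range_succ_eq_map, List.map_cons, List.map_map]
  congr 1
  · norm_num
  · apply List.map_congr_left
    intro b0 _
    simp only [Function.comp_apply, Nat.succ_eq_add_one, List.getD_cons_succ, Prod.mk.injEq]
    constructor <;> push_cast <;> ring

lemma blockOf_length (h : ℤ) (g : List ℕ) : (blockOf h g).length = g.length := by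
  simp [blockOf]

lemma blockOf_ne_nil (h : ℤ) (g : List ℕ) (hg : g ≠ []) : blockOf h g ≠ [] := by
  intro hcon
  apply hg
  have := blockOf_length h g
  rw [hcon] at this
  exact List.length_eq_zero_iff.mp this.symm

lemma blockOf_proper (h : ℤ) (g : List ℕ) (hp : ∀ x ∈ g, 0 < x) :
    ∀ s ∈ blockOf h g, s.1 ≤ s.2 := by
  induction g generalizing h with
  | nil => simp [blockOf_nil]
  | cons c g ih =>
    rw [blockOf_cons]
    intro s hs
    rcases List.mem_cons.mp hs with rfl | hs
    · have : 0 < c := hp c (by simp)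
      simp only []
      omega
    · exact ih (h+1) (fun x hx => hp x (by simp [hx])) s hs

lemma blockOf_chain (h : ℤ) (g : List ℕ) (hs : g.Pairwise (· ≥ ·)) :
    List.Chain' stp (blockOf h g) := by
  induction g generalizing h with
  | nil => simp [blockOf_nil, List.Chain']
  | cons c g ih =>
    rw [blockOf_cons, List.Chain', List.isChain_cons]
    refine ⟨?_, ih (h+1) (List.pairwise_cons.mp hs).2⟩
    intro y hy
    cases g with
    | nil => simp [blockOf_nil] at hy
    | cons c' g' =>
      rw [blockOf_cons] at hy
      simp only [List.head?_cons, Option.mem_def, Option.some.injEq] at hy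
      subst hy
      have hcc : c' ≤ c := (List.pairwise_cons.mp hs).1 c' (by simp)
      refine ⟨by ring, by push_cast; omega⟩

lemma blockOf_segLen (h : ℤ) (g : List ℕ) (hp : ∀ x ∈ g, 0 < x) :
    (blockOf h g).map (fun s => (segLen s).toNat) = g := by
  induction g generalizing h with
  | nil => simp [blockOf_nil]
  | cons c g ih =>
    rw [blockOf_cons, List.map_cons, ih (h+1) (fun x hx => hp x (by simp [hx]))]
    congr 1
    have := hp c (by simp)
    simp only [segLen]
    omega

lemma blockOf_head (h : ℤ) (c : ℕ) (g : List ℕ) :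
    (blockOf h (c :: g)).head? = some (h + 1 - (c:ℤ), h) := by
  rw [blockOf_cons]; rfl

lemma blockOf_headI_snd (h : ℤ) (g : List ℕ) (hg : g ≠ []) :
    (blockOf h g).headI.2 = h := by
  rcases List.exists_cons_of_ne_nil hg with ⟨c, g', rfl⟩
  rw [blockOf_cons]
  rfl

lemma blockOf_getLastD (h : ℤ) (g : List ℕ) (hg : g ≠ []) (d : Seg) :
    (blockOf h g).getLastD d =
      (h + (g.length : ℤ) - (g.getLastD 0 : ℤ), h + (g.length : ℤ) - 1) := by
  induction g generalizing h d with
  | nil => simp at hg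
  | cons c g ih =>
    rw [blockOf_cons]
    cases g with
    | nil =>
      rw [blockOf_nil]
      simp only [List.getLastD_cons, List.getLastD_nil, List.length_cons, List.length_nil,
        Prod.mk.injEq]
      constructor <;> push_cast <;> ring
    | cons c' g' =>
      rw [List.getLastD_cons, ih (h+1) (by simp)]
      simp only [List.getLastD_cons, List.length_cons, Prod.mk.injEq]
      constructor <;> push_cast <;> ring

lemma block_reconstruct (p : Seg) (t : List Seg) (hc : List.Chain stp p t)
    (hp : ∀ s ∈ p :: t, s.1 ≤ s.2) :
    blockOf p.2 ((p :: t).map (fun s => (segLen s).toNat)) = p :: t := by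
  induction t generalizing p with
  | nil =>
    rw [List.map_cons, List.map_nil, blockOf_cons, blockOf_nil]
    have hpp := hp p (by simp)
    have h1 : ((segLen p).toNat : ℤ) = segLen p := by
      simp only [segLen]; omega
    congr 1
    rw [h1]
    simp only [segLen]
    obtain ⟨p1, p2⟩ := p
    simp only [Prod.mk.injEq]
    exact ⟨by ring, trivial⟩
  | cons q t' ih =>
    rcases List.chain_cons.mp hc with ⟨h1, h2⟩
    rw [List.map_cons, blockOf_cons]
    have hpp := hp p (by simp)
    have hL : ((segLen p).toNat : ℤ) = segLen p := by simp only [segLen]; omega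
    have hhd : (p.2 + 1 - ((segLen p).toNat : ℤ), p.2) = p := by
      rw [hL]
      simp only [segLen]
      obtain ⟨p1, p2⟩ := p
      simp only [Prod.mk.injEq]
      exact ⟨by ring, trivial⟩
    rw [hhd]
    have hq2 : p.2 + 1 = q.2 := h1.1.symm
    rw [hq2, ih q h2 (fun s hs => hp s (by simp at hs ⊢; tauto))]

lemma getLast?_eq_getLastD' {α : Type*} (l : List α) (hl : l ≠ []) (d : α) :
    l.getLast? = some (l.getLastD d) := by
  cases l with
  | nil => simp at hl
  | cons a t => rw [List.getLast?_cons, List.getLastD_cons, List.getLastD_eq_getLast?]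

lemma getLastD_eq_getD' {α : Type*} (l : List α) (hl : l ≠ []) (d : α) :
    l.getLastD d = l.getD (l.length - 1) d := by
  rw [List.getLastD_eq_getLast?, List.getLast?_eq_getLast hl, Option.getD_some,
      List.getLast_eq_getElem, List.getD_eq_getElem l d (by
        cases l with
        | nil => simp at hl
        | cons a t => simp)]

lemma getLastD_mem' {α : Type*} (l : List α) (hl : l ≠ []) (d : α) :
    l.getLastD d ∈ l := by
  rw [List.getLastD_eq_getLast?, List.getLast?_eq_getLast hl, Option.getD_some]
  exact List.getLast_mem hl

lemma map_getD_range {α : Type*} (l : List α) (d : α) :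
    (List.range l.length).map (fun i => l.getD i d) = l := by
  apply List.ext_getElem
  · simp
  · intro i h1 h2
    simp only [List.getElem_map, List.getElem_range]
    exact List.getD_eq_getElem l d h2

lemma reverse_map_range_getD (f : List ℤ) :
    ((List.range f.length).map (fun a0 => f.getD (f.length - 1 - a0) 0)).reverse = f := by
  apply List.ext_getElem
  · simp
  · intro i h1 h2
    rw [List.getElem_reverse]
    simp only [List.getElem_map, List.getElem_range, List.length_map, List.length_range]
    simp only [List.length_map, List.length_range, List.length_reverse] at h1
    rw [List.getD_eq_getElem _ _ (by omega)]
    congr 1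
    omega

lemma fstar_length (f : List ℤ) : (fstar f).length = f.length := by
  simp [fstar]

lemma fstar_getD (f : List ℤ) (a0 : ℕ) (ha : a0 < f.length) :
    (fstar f).getD a0 0 = -(f.getD (f.length - 1 - a0) 0) := by
  unfold fstar
  rw [List.getD_eq_getElem _ _ (by simp [ha]), List.getElem_reverse]
  simp only [List.length_map, List.getElem_map]
  rw [List.getD_eq_getElem _ _ (by omega)]

def blocksOf (f : List ℤ) (γ : List (List ℕ)) : List (List Seg) :=
  (List.range γ.length).map (fun a0 => blockOf (f.getD (f.length - 1 - a0) 0) (γ.getD a0 []))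

lemma blocksOf_length (f : List ℤ) (γ : List (List ℕ)) : (blocksOf f γ).length = γ.length := by
  simp [blocksOf]

lemma blocksOf_getElem (f : List ℤ) (γ : List (List ℕ)) (a0 : ℕ) (h : a0 < (blocksOf f γ).length) :
    (blocksOf f γ)[a0] = blockOf (f.getD (f.length - 1 - a0) 0) (γ.getD a0 []) := by
  simp [blocksOf]

lemma wordOf_eq (f : List ℤ) (γ : List (List ℕ)) : wordOf f γ = (blocksOf f γ).flatten := by
  unfold wordOf blocksOf blockOf
  congr 1
  apply List.map_congr_left
  intro a0 _
  apply List.map_congr_left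
  intro b0 _
  simp only [Prod.mk.injEq]
  constructor <;> push_cast <;> ring

def wstp (p q : Seg) : Prop := p.2 ≤ q.2 ∧ (p.2 = q.2 → q.1 ≤ p.1)

lemma boundary_iff (h h' : ℤ) (g g' : List ℕ) (hg : g ≠ []) (hg' : g' ≠ [])
    (hpos : ∀ x ∈ g, 0 < x) (hpos' : ∀ x ∈ g', 0 < x) (hD : h ≤ h') :
    (wstp (h + (g.length:ℤ) - (g.getLastD 0 : ℤ), h + (g.length:ℤ) - 1)
       (h' + 1 - (g'.getD 0 0 : ℤ), h') ∧
     ¬ stp (h + (g.length:ℤ) - (g.getLastD 0 : ℤ), h + (g.length:ℤ) - 1)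
       (h' + 1 - (g'.getD 0 0 : ℤ), h')) ↔
    ((g.length : ℤ) ≤ (h' - h) + 1 ∧
     g.getD (h' - h).toNat 0 ≤ g'.getD 0 0 ∧
     ((g.length : ℤ) = h' - h → (g.getD ((h' - h).toNat - 1) 0 : ℤ) ≤ (g'.getD 0 0 : ℤ) - 1)) := by
  have ht1 : 1 ≤ g.length := List.length_pos_iff.mpr hg
  have hgl : g.getLastD 0 = g.getD (g.length - 1) 0 := getLastD_eq_getD' g hg 0
  have hglpos : 0 < g.getLastD 0 := hpos _ (getLastD_mem' g hg 0)
  have hc' : 0 < g'.getD 0 0 := by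
    refine hpos' _ ?_
    rw [List.getD_eq_getElem g' 0 (List.length_pos_iff.mpr hg')]
    exact List.getElem_mem _
  have hDnat : (((h' - h).toNat : ℤ)) = h' - h := Int.toNat_of_nonneg (by omega)
  unfold wstp stp
  simp only [not_and, not_lt]
  constructor
  · rintro ⟨⟨w1, w2⟩, nb⟩
    have c1 : (g.length : ℤ) ≤ (h' - h) + 1 := by omega
    refine ⟨c1, ?_, ?_⟩
    · by_cases hteq : (g.length : ℤ) = (h' - h) + 1
      · have hidx : (h' - h).toNat = g.length - 1 := by omega
        rw [hidx, ← hgl]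
        have := w2 (by omega)
        omega
      · rw [List.getD_eq_default g 0 (n := (h' - h).toNat) (by omega)]
        exact Nat.zero_le _
    · intro hteq
      have hidx : (h' - h).toNat - 1 = g.length - 1 := by omega
      rw [hidx, ← hgl]
      have := nb (by omega)
      omega
  · rintro ⟨c1, c2, c3⟩
    refine ⟨⟨by omega, ?_⟩, ?_⟩
    · intro tie
      have hidx : (h' - h).toNat = g.length - 1 := by omega
      rw [hidx, ← hgl] at c2
      omega
    · intro e1
      have hteq : (g.length : ℤ) = h' - h := by omega
      have hidx : (h' - h).toNat - 1 = g.length - 1 := by omega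
      rw [hidx, ← hgl] at c3
      have := c3 hteq
      omega

lemma map_segLen_of_proper (h : ℤ) (g : List ℕ) (hp : ∀ x ∈ g, 0 < x) :
    (blockOf h g).map segLen = g.map (Nat.cast : ℕ → ℤ) := by
  apply List.ext_getElem
  · rw [List.length_map, List.length_map, blockOf_length]
  · intro n h1 h2
    rw [List.length_map, blockOf_length] at h1
    simp only [List.getElem_map]
    unfold blockOf
    simp only [List.getElem_map, List.getElem_range]
    simp only [segLen]
    rw [List.getD_eq_getElem g 0 h1]
    push_cast
    ring

lemma stp_to_wstp (p q : Seg) (h : stp p q) : wstp p q := by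
  obtain ⟨h1, h2⟩ := h
  exact ⟨by omega, by omega⟩

lemma backward (r : ℕ) (f : List ℤ) (hne : f ≠ []) (hf : f.Pairwise (· ≥ ·))
    (γ : List (List ℕ)) (hγ : IsStandardKleshchev r (fstar f) γ) :
    IsStandardWord r (wordOf f γ) ∧ fOf (wordOf f γ) = f ∧ gammaOf (wordOf f γ) = γ := by
  obtain ⟨hlen, hmp, hnonnil, hSK2, hSK3⟩ := hγ
  rw [fstar_length] at hlen
  have hm1 : 1 ≤ f.length := List.length_pos_iff.mpr hne
  have hcomp : ∀ a0, a0 < γ.length → γ.getD a0 [] ∈ γ := by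
    intro a0 h
    rw [List.getD_eq_getElem _ _ h]
    exact List.getElem_mem _
  have hpart : ∀ a0, a0 < γ.length → IsPartition (γ.getD a0 []) :=
    fun a0 h => hmp.1 _ (hcomp a0 h)
  have hnn : ∀ a0, a0 < γ.length → γ.getD a0 [] ≠ [] := by
    intro a0 h
    have := hnonnil (a0 + 1) (by omega) (by omega)
    simpa [mpart] using this
  have hfs : ∀ i j, i ≤ j → j < f.length → f.getD j 0 ≤ f.getD i 0 := by
    intro i j hij hj
    rcases Nat.eq_or_lt_of_le hij with rfl | hlt
    · exact le_refl _
    · rw [List.getD_eq_getElem f 0 hj, List.getD_eq_getElem f 0 (show i < f.length by omega)]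
      exact hf.rel_get_of_lt (a := ⟨i, by omega⟩) (b := ⟨j, hj⟩) hlt
  set L := blocksOf f γ with hL
  have hLlen : L.length = γ.length := blocksOf_length f γ
  have hLget : ∀ a0 (h : a0 < L.length),
      L[a0] = blockOf (f.getD (f.length - 1 - a0) 0) (γ.getD a0 []) :=
    fun a0 h => blocksOf_getElem f γ a0 h
  have hLne : ∀ B ∈ L, B ≠ [] ∧ B.Chain' stp := by
    intro B hB
    rcases List.mem_iff_getElem.mp hB with ⟨a0, ha0, rfl⟩
    rw [hLget a0 ha0]
    exact ⟨blockOf_ne_nil _ _ (hnn a0 (by omega)),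
      blockOf_chain _ _ (hpart a0 (by omega)).1⟩
  -- boundary conditions
  have hbound : ∀ a0, a0 + 1 < γ.length →
      (wstp (f.getD (f.length - 1 - a0) 0 + ((γ.getD a0 []).length : ℤ)
              - ((γ.getD a0 []).getLastD 0 : ℤ),
             f.getD (f.length - 1 - a0) 0 + ((γ.getD a0 []).length : ℤ) - 1)
        (f.getD (f.length - 1 - (a0+1)) 0 + 1 - ((γ.getD (a0+1) []).getD 0 0 : ℤ),
         f.getD (f.length - 1 - (a0+1)) 0) ∧
       ¬ stp (f.getD (f.length - 1 - a0) 0 + ((γ.getD a0 []).length : ℤ)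
              - ((γ.getD a0 []).getLastD 0 : ℤ),
             f.getD (f.length - 1 - a0) 0 + ((γ.getD a0 []).length : ℤ) - 1)
        (f.getD (f.length - 1 - (a0+1)) 0 + 1 - ((γ.getD (a0+1) []).getD 0 0 : ℤ),
         f.getD (f.length - 1 - (a0+1)) 0)) := by
    intro a0 ha0
    set h1 := f.getD (f.length - 1 - a0) 0 with hh1
    set h2 := f.getD (f.length - 1 - (a0+1)) 0 with hh2
    have hD : h2 - h1 = fpart (fstar f) (a0+1) - fpart (fstar f) (a0+1+1) := by
      show h2 - h1 = (fstar f).getD a0 0 - (fstar f).getD (a0+1) 0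
      rw [fstar_getD f a0 (by omega), fstar_getD f (a0+1) (by omega)]
      ring
    have hDge : h1 ≤ h2 := hfs (f.length - 1 - (a0+1)) (f.length - 1 - a0) (by omega) (by omega)
    rw [boundary_iff h1 h2 _ _ (hnn a0 (by omega)) (hnn (a0+1) (by omega))
        (hpart a0 (by omega)).2 (hpart (a0+1) (by omega)).2 hDge]
    have hs2 := hSK2 (a0+1) (by omega) (by rw [fstar_length]; omega)
    have hs3 := hSK3 (a0+1) (by omega) (by rw [fstar_length]; omega)
    rw [← hD] at hs2 hs3
    have e1 : mpart γ (a0+1) = γ.getD a0 [] := by simp [mpart]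
    have e2 : mpart γ (a0+1+1) = γ.getD (a0+1) [] := by simp [mpart]
    rw [e1, e2] at hs2 hs3
    unfold part at hs2 hs3
    simp only [Nat.add_sub_cancel, Nat.sub_self] at hs2 hs3
    exact ⟨hs2.1, hs2.2, hs3⟩
  have hBlocky : BlockyP L := by
    constructor
    · exact hLne
    · rw [List.Chain', List.isChain_iff_getElem]
      intro i hi
      intro p hp q hq
      rw [hLget i (by omega)] at hp
      rw [hLget (i+1) (by omega)] at hq
      rw [getLast?_eq_getLastD' _ (blockOf_ne_nil _ _ (hnn i (by omega))) ((0,0) : Seg)] at hp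
      simp only [Option.mem_def, Option.some.injEq] at hp
      rw [blockOf_getLastD _ _ (hnn i (by omega))] at hp
      subst hp
      rcases List.exists_cons_of_ne_nil (hnn (i+1) (by omega)) with ⟨c', g', hcg⟩
      rw [hcg, blockOf_head] at hq
      simp only [Option.mem_def, Option.some.injEq] at hq
      subst hq
      have hb := (hbound i (by omega)).2
      rw [hcg] at hb
      simpa using hb
  have hw : wordOf f γ = L.flatten := wordOf_eq f γ
  have hblocks : blocks (wordOf f γ) = L := by
    rw [hw]; exact blocks_flatten_of_blockyP L hBlocky
  have hfOf : fOf (wordOf f γ) = f := by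
    unfold fOf
    rw [hblocks]
    have heq : L.map (fun b => b.headI.2)
        = (List.range f.length).map (fun a0 => f.getD (f.length - 1 - a0) 0) := by
      apply List.ext_getElem
      · rw [List.length_map, hLlen, hlen, List.length_map, List.length_range]
      · intro n h1 h2
        rw [List.length_map, hLlen] at h1
        simp only [List.getElem_map, List.getElem_range]
        rw [hLget n (by omega)]
        exact blockOf_headI_snd _ _ (hnn n h1)
    rw [heq, reverse_map_range_getD]
  have hgamma : gammaOf (wordOf f γ) = γ := by
    unfold gammaOf
    rw [hblocks]
    apply List.ext_getElem
    · rw [List.length_map, hLlen]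
    · intro n h1 h2
      rw [List.length_map, hLlen] at h1
      simp only [List.getElem_map]
      rw [hLget n (by omega), blockOf_segLen _ _ (hpart n h1).2]
      exact List.getD_eq_getElem _ _ h1
  refine ⟨⟨?_, ?_, ?_, ?_⟩, hfOf, hgamma⟩
  · intro hcon
    rw [hcon] at hblocks
    have hb0 : blocks ([] : List Seg) = [] := by simp [blocks]
    rw [hb0] at hblocks
    rw [← hblocks] at hLlen
    simp only [List.length_nil] at hLlen
    omega
  · intro s hs
    rw [hw] at hs
    rcases List.mem_flatten.mp hs with ⟨B, hB, hsB⟩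
    rcases List.mem_iff_getElem.mp hB with ⟨a0, ha0, rfl⟩
    rw [hLget a0 ha0] at hsB
    exact blockOf_proper _ _ (hpart a0 (by omega)).2 s hsB
  · rw [hw]
    have hnil : [] ∉ L := fun hcon => (hLne [] hcon).1 rfl
    rw [List.Chain', List.isChain_flatten hnil]
    constructor
    · intro l hl
      exact List.IsChain.imp (fun {p q} h => stp_to_wstp p q h) (hLne l hl).2
    · rw [List.isChain_iff_getElem]
      intro i hi
      intro p hp q hq
      rw [hLget i (by omega)] at hp
      rw [hLget (i+1) (by omega)] at hq
      rw [getLast?_eq_getLastD' _ (blockOf_ne_nil _ _ (hnn i (by omega))) ((0,0) : Seg)] at hp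
      simp only [Option.mem_def, Option.some.injEq] at hp
      rw [blockOf_getLastD _ _ (hnn i (by omega))] at hp
      subst hp
      rcases List.exists_cons_of_ne_nil (hnn (i+1) (by omega)) with ⟨c', g', hcg⟩
      rw [hcg, blockOf_head] at hq
      simp only [Option.mem_def, Option.some.injEq] at hq
      subst hq
      have hb := (hbound i (by omega)).1
      rw [hcg] at hb
      simp only [List.getD_cons_zero] at hb
      exact hb
  · rw [hw, List.map_flatten, List.sum_flatten]
    have heq : L.map (List.map segLen) = γ.map (fun g => g.map (Nat.cast : ℕ → ℤ)) := by
      apply List.ext_getElem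
      · rw [List.length_map, List.length_map, hLlen]
      · intro n h1 h2
        rw [List.length_map, hLlen] at h1
        simp only [List.getElem_map]
        rw [hLget n (by omega), map_segLen_of_proper _ _ (hpart n h1).2]
        rw [List.getD_eq_getElem _ _ h1]
    rw [heq, ← hmp.2, List.map_map, Nat.cast_list_sum, List.map_map]
    congr 1
    apply List.map_congr_left
    intro g hg
    simp only [Function.comp_apply]
    exact (Nat.cast_list_sum g).symm

lemma partition_of_block (B : List Seg) (hc : B.Chain' stp) (hp : ∀ s ∈ B, s.1 ≤ s.2) :
    IsPartition (B.map (fun s => (segLen s).toNat)) := by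
  constructor
  · rw [← List.isChain_iff_pairwise, List.isChain_map]
    refine List.IsChain.imp ?_ hc
    intro p q hpq
    obtain ⟨e, lt⟩ := hpq
    simp only [segLen, ge_iff_le]
    omega
  · intro x hx
    rcases List.mem_map.mp hx with ⟨s, hs, rfl⟩
    have := hp s hs
    simp only [segLen]
    omega

lemma sum_toNat_eq (w : List Seg) (hp : ∀ s ∈ w, s.1 ≤ s.2) :
    ((w.map (fun s => (segLen s).toNat)).sum : ℤ) = (w.map segLen).sum := by
  induction w with
  | nil => simp
  | cons s t ih =>
    simp only [List.map_cons, List.sum_cons]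
    have h1 := hp s (by simp)
    have h2 := ih (fun x hx => hp x (by simp [hx]))
    have h3 : ((segLen s).toNat : ℤ) = segLen s := by
      simp only [segLen]; omega
    rw [Nat.cast_add, h3, h2]

lemma reverse_map_getD {α β : Type*} (L : List α) (g : α → β) (d : β) (a0 : ℕ)
    (h : a0 < L.length) :
    ((L.map g).reverse).getD ((L.map g).reverse.length - 1 - a0) d = g L[a0] := by
  rw [List.getD_eq_getElem _ _ (by simp only [List.length_reverse, List.length_map]; omega)]
  rw [List.getElem_reverse, List.getElem_map]
  congr 1
  simp only [List.length_reverse, List.length_map]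
  simp only [show L.length - 1 - (L.length - 1 - a0) = a0 from by omega]

lemma forward (r : ℕ) (w : List Seg) (hw : IsStandardWord r w) :
    wordOf (fOf w) (gammaOf w) = w ∧ IsStandardKleshchev r (fstar (fOf w)) (gammaOf w) := by
  obtain ⟨hwne, hprop, hchain, hsum⟩ := hw
  set L := blocks w with hLdef
  have hBlocky : BlockyP L := blockyP_blocks w
  have hfl : L.flatten = w := flatten_blocks w
  set f := fOf w with hfdef
  set γ := gammaOf w with hγdef
  have hγL : γ = L.map (fun b => b.map (fun s => (segLen s).toNat)) := rfl
  have hfL : f = (L.map (fun b => b.headI.2)).reverse := rfl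
  have hγlen : γ.length = L.length := by rw [hγL, List.length_map]
  have hflen : f.length = L.length := by rw [hfL, List.length_reverse, List.length_map]
  have hLprop : ∀ B ∈ L, ∀ s ∈ B, s.1 ≤ s.2 := by
    intro B hB s hs
    exact hprop s (by rw [← hfl]; exact List.mem_flatten.mpr ⟨B, hB, hs⟩)
  have hLne : ∀ a0, (h : a0 < L.length) → L[a0] ≠ [] := by
    intro a0 h
    exact (hBlocky.1 _ (List.getElem_mem h)).1
  have hγget : ∀ a0, (h : a0 < L.length) →
      γ.getD a0 [] = L[a0].map (fun s => (segLen s).toNat) := by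
    intro a0 h
    rw [hγL, List.getD_eq_getElem _ _ (by rw [List.length_map]; exact h), List.getElem_map]
  have hfget : ∀ a0, (h : a0 < L.length) → f.getD (f.length - 1 - a0) 0 = L[a0].headI.2 := by
    intro a0 h
    conv_lhs => rw [hfL]
    exact reverse_map_getD L (fun b => b.headI.2) 0 a0 h
  -- reconstruction of blocks
  have hrecon : ∀ a0, (h : a0 < L.length) →
      blockOf (L[a0].headI.2) (L[a0].map (fun s => (segLen s).toNat)) = L[a0] := by
    intro a0 h
    rcases List.exists_cons_of_ne_nil (hLne a0 h) with ⟨p, t, hpt⟩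
    rw [hpt]
    have hc : List.Chain stp p t := by
      have := (hBlocky.1 _ (List.getElem_mem h)).2
      rw [hpt] at this
      exact this
    have hpr : ∀ s ∈ p :: t, s.1 ≤ s.2 := by
      intro s hs
      apply hLprop _ (List.getElem_mem h)
      rw [hpt]; exact hs
    exact block_reconstruct p t hc hpr
  have hblocksOf : blocksOf f γ = L := by
    apply List.ext_getElem
    · rw [blocksOf_length, hγlen]
    · intro n h1 h2
      rw [blocksOf_length, hγlen] at h1
      rw [blocksOf_getElem, hfget n h1, hγget n h1, hrecon n h1]
  have hword : wordOf f γ = w := by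
    rw [wordOf_eq, hblocksOf, hfl]
  have hLOf : ∀ a0, (h : a0 < L.length) →
      L[a0] = blockOf (f.getD (f.length - 1 - a0) 0) (γ.getD a0 []) := by
    intro a0 h
    rw [hfget a0 h, hγget a0 h, hrecon a0 h]
  have hpartγ : ∀ a0, (h : a0 < L.length) → IsPartition (γ.getD a0 []) := by
    intro a0 h
    rw [hγget a0 h]
    exact partition_of_block _ (hBlocky.1 _ (List.getElem_mem h)).2 (hLprop _ (List.getElem_mem h))
  have hγne : ∀ a0, (h : a0 < L.length) → γ.getD a0 [] ≠ [] := by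
    intro a0 h
    rw [hγget a0 h]
    simp only [ne_eq, List.map_eq_nil_iff]
    exact hLne a0 h
  have hnil : [] ∉ L := fun hcon => (hBlocky.1 [] hcon).1 rfl
  have hchain2 := hchain
  rw [← hfl, List.Chain', List.isChain_flatten hnil] at hchain2
  have hbet := hchain2.2
  have hbrky := hBlocky.2
  rw [List.isChain_iff_getElem] at hbet
  rw [List.Chain', List.isChain_iff_getElem] at hbrky
  have hbd : ∀ a0, a0 + 1 < L.length →
      (((γ.getD a0 []).length : ℤ)
          ≤ (f.getD (f.length - 1 - (a0+1)) 0 - f.getD (f.length - 1 - a0) 0) + 1 ∧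
       (γ.getD a0 []).getD
          (f.getD (f.length - 1 - (a0+1)) 0 - f.getD (f.length - 1 - a0) 0).toNat 0
          ≤ (γ.getD (a0+1) []).getD 0 0 ∧
       (((γ.getD a0 []).length : ℤ)
            = f.getD (f.length - 1 - (a0+1)) 0 - f.getD (f.length - 1 - a0) 0 →
        ((γ.getD a0 []).getD
          ((f.getD (f.length - 1 - (a0+1)) 0 - f.getD (f.length - 1 - a0) 0).toNat - 1) 0 : ℤ)
          ≤ ((γ.getD (a0+1) []).getD 0 0 : ℤ) - 1)) := by
    intro a0 hc
    set h1 := f.getD (f.length - 1 - a0) 0 with hh1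
    set h2 := f.getD (f.length - 1 - (a0+1)) 0 with hh2
    have hx := hbet a0 (by omega)
    have hy := hbrky a0 (by omega)
    have hL2 : L[a0+1] = blockOf h2 (γ.getD (a0+1) []) := hLOf (a0+1) hc
    have hgl : L[a0].getLast? = some
        (h1 + ((γ.getD a0 []).length : ℤ) - ((γ.getD a0 []).getLastD 0 : ℤ),
         h1 + ((γ.getD a0 []).length : ℤ) - 1) := by
      rw [hLOf a0 (by omega),
          getLast?_eq_getLastD' _ (blockOf_ne_nil _ _ (hγne a0 (by omega))) ((0,0) : Seg),
          blockOf_getLastD _ _ (hγne a0 (by omega))]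
    rcases List.exists_cons_of_ne_nil (hγne (a0+1) hc) with ⟨c', g'', hcg⟩
    have hhd : L[a0+1].head? = some (h2 + 1 - ((γ.getD (a0+1) []).getD 0 0 : ℤ), h2) := by
      rw [hL2, hcg, blockOf_head]
      simp
    have hw1 := hx _ hgl _ hhd
    have hw2 := hy _ hgl _ hhd
    have ht1 : 1 ≤ (γ.getD a0 []).length := List.length_pos_iff.mpr (hγne a0 (by omega))
    have hle : h1 ≤ h2 := by
      have h5 := hw1.1
      omega
    exact (boundary_iff h1 h2 _ _ (hγne a0 (by omega)) (hγne (a0+1) hc)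
        (hpartγ a0 (by omega)).2 (hpartγ (a0+1) hc).2 hle).mp ⟨hw1, hw2⟩
  refine ⟨hword, ?_, ⟨?_, ?_⟩, ?_, ?_, ?_⟩
  · rw [fstar_length, hγlen, hflen]
  · -- partitions
    intro p hp
    rw [hγL] at hp
    rcases List.mem_map.mp hp with ⟨B, hB, rfl⟩
    exact partition_of_block B (hBlocky.1 B hB).2 (hLprop B hB)
  · -- sum
    have key : ((γ.map List.sum).sum : ℤ) = (r : ℤ) := by
      rw [← hsum]
      have h1 : (γ.map List.sum).sum = (w.map (fun s => (segLen s).toNat)).sum := by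
        rw [hγL, ← hfl, List.map_flatten, List.sum_flatten, List.map_map]
      rw [h1]
      exact sum_toNat_eq w hprop
    exact_mod_cast key
  · -- nonempty components
    intro a ha1 ha2
    unfold mpart
    rw [hγget (a-1) (by omega)]
    simp only [ne_eq, List.map_eq_nil_iff]
    exact hLne (a-1) (by omega)
  · -- SK2
    intro a ha1 ha2
    rw [fstar_length, hflen] at ha2
    obtain ⟨a0, rfl⟩ : ∃ a0, a = a0 + 1 := ⟨a - 1, by omega⟩
    have hcond : a0 + 1 < L.length := by omega
    have hD : fpart (fstar f) (a0+1) - fpart (fstar f) (a0+1+1)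
        = f.getD (f.length - 1 - (a0+1)) 0 - f.getD (f.length - 1 - a0) 0 := by
      show (fstar f).getD a0 0 - (fstar f).getD (a0+1) 0 = _
      rw [fstar_getD f a0 (by omega), fstar_getD f (a0+1) (by omega)]
      ring
    have hb := hbd a0 hcond
    have e1 : mpart γ (a0+1) = γ.getD a0 [] := by simp [mpart]
    have e2 : mpart γ (a0+1+1) = γ.getD (a0+1) [] := by simp [mpart]
    rw [hD, e1, e2]
    unfold part
    simp only [Nat.add_sub_cancel, Nat.sub_self]
    exact ⟨hb.1, hb.2.1⟩
  · -- SK3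
    intro a ha1 ha2
    rw [fstar_length, hflen] at ha2
    obtain ⟨a0, rfl⟩ : ∃ a0, a = a0 + 1 := ⟨a - 1, by omega⟩
    have hcond : a0 + 1 < L.length := by omega
    have hD : fpart (fstar f) (a0+1) - fpart (fstar f) (a0+1+1)
        = f.getD (f.length - 1 - (a0+1)) 0 - f.getD (f.length - 1 - a0) 0 := by
      show (fstar f).getD a0 0 - (fstar f).getD (a0+1) 0 = _
      rw [fstar_getD f a0 (by omega), fstar_getD f (a0+1) (by omega)]
      ring
    have hb := hbd a0 hcond
    have e1 : mpart γ (a0+1) = γ.getD a0 [] := by simp [mpart]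
    have e2 : mpart γ (a0+1+1) = γ.getD (a0+1) [] := by simp [mpart]
    rw [hD, e1, e2]
    unfold part
    simp only [Nat.add_sub_cancel, Nat.sub_self]
    exact hb.2.2

end Aux

/-- For each weakly decreasing integer tuple `f = (f_1, …, f_m)`, the map
`w ↦ γ̲_w` is a bijection from the set of standard words of total length `r` with `f_w = f`
onto the set of standard Kleshchev multipartitions of `r` relative to `f*`. -/
theorem gammaOf_bijOn (r : ℕ) (f : List ℤ) (hne : f ≠ []) (hf : f.Pairwise (· ≥ ·)) :
    Set.BijOn gammaOf {w | IsStandardWord r w ∧ fOf w = f}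
      {γ | IsStandardKleshchev r (fstar f) γ} := by
  refine ⟨?_, ?_, ?_⟩
  · intro w hw
    obtain ⟨hws, hfw⟩ := hw
    have h := (forward r w hws).2
    rw [hfw] at h
    exact h
  · intro w1 hw1 w2 hw2 heq
    have h1 := (forward r w1 hw1.1).1
    have h2 := (forward r w2 hw2.1).1
    rw [hw1.2] at h1
    rw [hw2.2] at h2
    rw [← h1, ← h2, heq]
  · intro γ hγ
    obtain ⟨hsw, hfOf, hg⟩ := backward r f hne hf γ hγ
    exact ⟨wordOf f γ, ⟨hsw, hfOf⟩, hg⟩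
end

section
/- Let ν ⊆ λ be partitions and define ρ = (ρ_1, ρ_2, …) by ρ_i = #{j ≥ 1 : λ′_j − ν′_j ≥ i}. Then ρ is a partition of |λ| − |ν|, and the Littlewood–Richardson coefficient c^λ_{νρ} equals 1; that is, there is exactly one semistandard skew tableau of shape λ/ν and content ρ whose reverse reading word is a lattice word. -/
lemma lr_conjCount_eq_countP (p : List ℕ) (j : ℕ) :
    conjCount p j = p.countP (fun x => decide (j ≤ x)) := by
  simp [conjCount, List.countP_eq_length_filter]

lemma lr_part_mem (p : List ℕ) (a : ℕ) : part p a = 0 ∨ part p a ∈ p := by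
  unfold part
  by_cases h : a - 1 < p.length
  · right; rw [List.getD_eq_getElem _ _ h]; exact List.getElem_mem h
  · left; rw [List.getD_eq_default]; omega

lemma lr_mem_le_headI {p : List ℕ} (hp : p.Pairwise (· ≥ ·)) : ∀ x ∈ p, x ≤ p.headI := by
  cases p with
  | nil => simp
  | cons y t =>
    intro x hx
    rcases List.mem_cons.mp hx with h | h
    · simp [h]
    · exact (List.pairwise_cons.mp hp).1 x h

lemma lr_part_le_headI {p : List ℕ} (hp : p.Pairwise (· ≥ ·)) (a : ℕ) : part p a ≤ p.headI := by
  rcases lr_part_mem p a with h | h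
  · omega
  · exact lr_mem_le_headI hp _ h

lemma lr_conj_le_length (p : List ℕ) (j : ℕ) : conjCount p j ≤ p.length :=
  List.length_filter_le _ _

lemma lr_conj_anti (p : List ℕ) {j j' : ℕ} (h : j ≤ j') : conjCount p j' ≤ conjCount p j := by
  rw [lr_conjCount_eq_countP, lr_conjCount_eq_countP]
  apply List.countP_mono_left
  intro x _ hx
  simp only [decide_eq_true_eq] at *
  omega

lemma lr_conj_iff {p : List ℕ} (hp : p.Pairwise (· ≥ ·)) :
    ∀ a j, 1 ≤ a → 1 ≤ j → (j ≤ part p a ↔ a ≤ conjCount p j) := by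
  induction p with
  | nil => intro a j ha hj; simp [part, conjCount]; omega
  | cons x t ih =>
    have hx : ∀ y ∈ t, x ≥ y := (List.pairwise_cons.mp hp).1
    have ht := (List.pairwise_cons.mp hp).2
    intro a j ha hj
    rw [lr_conjCount_eq_countP, List.countP_cons]
    by_cases hjx : j ≤ x
    · rw [if_pos (decide_eq_true hjx)]
      rcases Nat.exists_eq_add_of_le ha with ⟨a', rfl⟩
      cases a' with
      | zero =>
        have hpx : part (x :: t) (1 + 0) = x := rfl
        rw [hpx]
        omega
      | succ a'' =>
        have hps : part (x :: t) (1 + (a'' + 1)) = part t (a'' + 1) := by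
          unfold part
          have h1 : 1 + (a'' + 1) - 1 = a'' + 1 := by omega
          rw [h1]
          rfl
        rw [hps, ih ht (a'' + 1) j (by omega) hj, lr_conjCount_eq_countP]
        omega
    · have h0 : t.countP (fun x => decide (j ≤ x)) = 0 := by
        apply List.countP_eq_zero.mpr
        intro y hy
        simp only [decide_eq_true_eq]
        have := hx y hy; omega
      rw [if_neg (by simp [hjx]), h0]
      constructor
      · intro hle
        exfalso
        have : part (x :: t) a ≤ x := by
          rcases lr_part_mem (x :: t) a with h | h
          · omega
          · rcases List.mem_cons.mp h with h | h
            · omega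
            · exact hx _ h
        omega
      · intro h; omega


lemma lr_conj_mono (lam nu : List ℕ) (hlam : lam.Pairwise (· ≥ ·)) (hnu : nu.Pairwise (· ≥ ·))
    (hsub : ∀ k, part nu k ≤ part lam k) (j : ℕ) (hj : 1 ≤ j) :
    conjCount nu j ≤ conjCount lam j := by
  by_cases h : 1 ≤ conjCount nu j
  · exact (lr_conj_iff hlam _ j h hj).mp (le_trans ((lr_conj_iff hnu _ j h hj).mpr le_rfl) (hsub _))
  · omega

lemma lr_skew_iff {lam nu : List ℕ} (hlam : lam.Pairwise (· ≥ ·)) (hnu : nu.Pairwise (· ≥ ·))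
    (a b : ℕ) :
    IsSkewCell lam nu a b ↔ 1 ≤ a ∧ 1 ≤ b ∧ conjCount nu b < a ∧ a ≤ conjCount lam b := by
  unfold IsSkewCell
  constructor
  · rintro ⟨ha, hnb, hlb⟩
    have hb : 1 ≤ b := by omega
    refine ⟨ha, hb, ?_, (lr_conj_iff hlam a b ha hb).mp hlb⟩
    by_contra h
    have : a ≤ conjCount nu b := by omega
    have := (lr_conj_iff hnu a b ha hb).mpr this
    omega
  · rintro ⟨ha, hb, hnb, hlb⟩
    refine ⟨ha, ?_, (lr_conj_iff hlam a b ha hb).mpr hlb⟩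
    by_contra h
    have : b ≤ part nu a := by omega
    have := (lr_conj_iff hnu a b ha hb).mp this
    omega

lemma lr_sum_conj {p : List ℕ} {M : ℕ} (hM : ∀ x ∈ p, x ≤ M) :
    ∑ j0 ∈ Finset.range M, conjCount p (j0 + 1) = p.sum := by
  induction p with
  | nil => simp [conjCount]
  | cons x t ih =>
    have hx : x ≤ M := hM x List.mem_cons_self
    have ht : ∀ y ∈ t, y ≤ M := fun y hy => hM y (List.mem_cons_of_mem _ hy)
    have hcc : ∀ j0 : ℕ, conjCount (x :: t) (j0 + 1)
        = conjCount t (j0 + 1) + (if j0 < x then 1 else 0) := by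
      intro j0
      rw [lr_conjCount_eq_countP, lr_conjCount_eq_countP, List.countP_cons]
      congr 1
      by_cases h : j0 < x
      · rw [if_pos (decide_eq_true (by omega : j0 + 1 ≤ x)), if_pos h]
      · rw [if_neg (by simp; omega), if_neg h]
    simp only [hcc]
    rw [Finset.sum_add_distrib, ih ht]
    have : ∑ j0 ∈ Finset.range M, (if j0 < x then 1 else 0) = x := by
      rw [← Finset.card_filter]
      have : Finset.filter (fun j0 => j0 < x) (Finset.range M) = Finset.range x := by
        ext k; simp; omega
      rw [this, Finset.card_range]
    rw [this]
    simp [List.sum_cons]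
    omega

lemma lr_countP_range (n : ℕ) (p : ℕ → Bool) :
    (List.range n).countP p = ((Finset.range n).filter (fun k => p k = true)).card := by
  induction n with
  | zero => simp
  | succ m ih =>
    rw [List.range_succ, List.countP_append, Finset.range_add_one, Finset.filter_insert]
    by_cases h : p m = true <;> simp [h, ih, Finset.card_insert_of_notMem]

lemma lr_take_flatten (rows : List (List ℕ)) (n : ℕ) :
    ∃ a s, (rows.flatten.take n) = (rows.take a).flatten ++ ((rows.getD a []).take s) := by
  induction rows generalizing n with
  | nil => exact ⟨0, 0, by simp⟩
  | cons r rest ih =>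
    by_cases h : n ≤ r.length
    · exact ⟨0, n, by simp [List.take_append_of_le_length h, h]⟩
    · rcases ih (n - r.length) with ⟨a, s, hs⟩
      refine ⟨a + 1, s, ?_⟩
      rw [List.flatten_cons, List.take_append]
      have h1 : r.take n = r := List.take_of_length_le (by omega)
      rw [h1, hs]
      simp


/-- The canonical tableau. -/
def lrT0 (lam nu : List ℕ) : ℕ → ℕ → ℕ :=
  fun a b => if IsSkewCell lam nu a b then a - conjCount nu b else 0

section LR
variable {lam nu : List ℕ}

lemma lr_T0_ss (hlam : IsPartition lam) (hnu : IsPartition nu) :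
    IsSSSkewTableau lam nu (lrT0 lam nu) := by
  refine ⟨fun a b h => if_neg h, ?_, ?_, ?_⟩
  · intro a b h
    have hc := (lr_skew_iff hlam.1 hnu.1 a b).mp h
    rw [lrT0, if_pos h]
    omega
  · intro a b h1 h2
    have hc1 := (lr_skew_iff hlam.1 hnu.1 a b).mp h1
    simp only [lrT0, if_pos h1, if_pos h2]
    have := lr_conj_anti nu (show b ≤ b + 1 by omega)
    omega
  · intro a b h1 h2
    have hc1 := (lr_skew_iff hlam.1 hnu.1 a b).mp h1
    simp only [lrT0, if_pos h1, if_pos h2]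
    omega

lemma lr_T0_count (hlam : IsPartition lam) (hnu : IsPartition nu) (i : ℕ) (hi : 1 ≤ i) :
    entryCount lam nu (lrT0 lam nu) i = rhoVal lam nu i := by
  unfold entryCount rhoVal
  refine Finset.card_bij' (fun ab _ => ab.2 - 1)
    (fun j0 _ => (conjCount nu (j0 + 1) + i, j0 + 1)) ?_ ?_ ?_ ?_
  · rintro ⟨a, b⟩ ha
    simp only [Finset.mem_filter, Finset.mem_product, Finset.mem_range] at ha ⊢
    obtain ⟨⟨-, -⟩, hsk, hv⟩ := ha
    rw [lrT0, if_pos hsk] at hv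
    have hc := (lr_skew_iff hlam.1 hnu.1 a b).mp hsk
    have hb : b ≤ lam.headI := le_trans hsk.2.2 (lr_part_le_headI hlam.1 a)
    have : b - 1 + 1 = b := by omega
    rw [this]
    exact ⟨by omega, by omega⟩
  · rintro j0 hj
    simp only [Finset.mem_filter, Finset.mem_product, Finset.mem_range] at hj ⊢
    obtain ⟨hj0, hcond⟩ := hj
    have hsk : IsSkewCell lam nu (conjCount nu (j0 + 1) + i) (j0 + 1) :=
      (lr_skew_iff hlam.1 hnu.1 _ _).mpr ⟨by omega, by omega, by omega, by omega⟩
    have hL : conjCount lam (j0 + 1) ≤ lam.length := lr_conj_le_length lam (j0 + 1)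
    refine ⟨⟨by omega, by omega⟩, hsk, ?_⟩
    rw [lrT0, if_pos hsk]
    have hc := (lr_skew_iff hlam.1 hnu.1 (conjCount nu (j0 + 1) + i) (j0 + 1)).mp hsk
    omega
  · rintro ⟨a, b⟩ ha
    simp only [Finset.mem_filter, Finset.mem_product, Finset.mem_range] at ha
    obtain ⟨⟨-, -⟩, hsk, hv⟩ := ha
    rw [lrT0, if_pos hsk] at hv
    have hc := (lr_skew_iff hlam.1 hnu.1 a b).mp hsk
    have hb : b - 1 + 1 = b := by omega
    dsimp only
    rw [hb, Prod.mk.injEq]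
    exact ⟨by omega, rfl⟩
  · rintro j0 hj
    simp

lemma lr_sum_list_range {M : Type*} [AddCommMonoid M] (f : ℕ → M) (n : ℕ) :
    ((List.range n).map f).sum = ∑ i ∈ Finset.range n, f i := by
  induction n with
  | zero => simp
  | succ m ih => rw [List.range_succ, List.map_append, List.sum_append, Finset.sum_range_succ, ih]; simp

lemma lr_row_count (hlam : IsPartition lam) (hnu : IsPartition nu) (r0 v : ℕ) (hv : 1 ≤ v) :
    ((List.range (part lam (r0 + 1) - part nu (r0 + 1))).map
        (fun k => lrT0 lam nu (r0 + 1) (part lam (r0 + 1) - k))).count v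
      = ((Finset.range lam.headI).filter (fun b0 =>
          v + conjCount nu (b0 + 1) ≤ conjCount lam (b0 + 1) ∧
          conjCount nu (b0 + 1) + v = r0 + 1)).card := by
  rw [List.count_eq_countP, List.countP_map, lr_countP_range]
  have hfc : (Finset.range (part lam (r0 + 1) - part nu (r0 + 1))).filter
        (fun k => (((fun x => x == v) ∘ fun k => lrT0 lam nu (r0 + 1) (part lam (r0 + 1) - k)) k) = true)
      = (Finset.range (part lam (r0 + 1) - part nu (r0 + 1))).filter
        (fun k => lrT0 lam nu (r0 + 1) (part lam (r0 + 1) - k) = v) := by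
    apply Finset.filter_congr; intro k _; simp
  rw [hfc]
  refine Finset.card_bij' (fun k _ => (part lam (r0 + 1) - k) - 1)
    (fun b0 _ => part lam (r0 + 1) - (b0 + 1)) ?_ ?_ ?_ ?_
  · intro k hk
    simp only [Finset.mem_filter, Finset.mem_range] at hk ⊢
    obtain ⟨hkl, hkv⟩ := hk
    set b := part lam (r0 + 1) - k with hbdef
    have hsk : IsSkewCell lam nu (r0 + 1) b := ⟨by omega, by omega, by omega⟩
    rw [lrT0, if_pos hsk] at hkv
    have hc := (lr_skew_iff hlam.1 hnu.1 (r0 + 1) b).mp hsk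
    have hbh : b ≤ lam.headI := le_trans hsk.2.2 (lr_part_le_headI hlam.1 (r0 + 1))
    have hb1 : b - 1 + 1 = b := by omega
    rw [hb1]
    exact ⟨by omega, by omega, by omega⟩
  · intro b0 hb0
    simp only [Finset.mem_filter, Finset.mem_range] at hb0 ⊢
    obtain ⟨hb0h, hle, heq⟩ := hb0
    have hsk : IsSkewCell lam nu (r0 + 1) (b0 + 1) :=
      (lr_skew_iff hlam.1 hnu.1 _ _).mpr ⟨by omega, by omega, by omega, by omega⟩
    obtain ⟨-, hnb, hlb⟩ := hsk
    constructor
    · omega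
    · have hbeq : part lam (r0 + 1) - (part lam (r0 + 1) - (b0 + 1)) = b0 + 1 := by omega
      rw [hbeq, lrT0, if_pos ⟨by omega, hnb, hlb⟩]
      omega
  · intro k hk
    simp only [Finset.mem_filter, Finset.mem_range] at hk
    omega
  · intro b0 hb0
    simp only [Finset.mem_filter, Finset.mem_range] at hb0
    obtain ⟨hb0h, hle, heq⟩ := hb0
    have hsk : IsSkewCell lam nu (r0 + 1) (b0 + 1) :=
      (lr_skew_iff hlam.1 hnu.1 _ _).mpr ⟨by omega, by omega, by omega, by omega⟩
    obtain ⟨-, hnb, hlb⟩ := hsk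
    omega

lemma lr_prefix_count (hlam : IsPartition lam) (hnu : IsPartition nu) (m v : ℕ) (hv : 1 ≤ v) :
    ((((List.range lam.length).map (fun a0 =>
        (List.range (part lam (a0 + 1) - part nu (a0 + 1))).map
          (fun k => lrT0 lam nu (a0 + 1) (part lam (a0 + 1) - k)))).take m).flatten).count v
      = ((Finset.range lam.headI).filter (fun b0 =>
          v + conjCount nu (b0 + 1) ≤ conjCount lam (b0 + 1) ∧
          conjCount nu (b0 + 1) + v ≤ min m lam.length)).card := by
  rw [← List.map_take, List.take_range, List.count_flatten, List.map_map]
  have : (List.count v ∘ fun a0 =>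
      (List.range (part lam (a0 + 1) - part nu (a0 + 1))).map
        (fun k => lrT0 lam nu (a0 + 1) (part lam (a0 + 1) - k)))
      = fun r0 => ((Finset.range lam.headI).filter (fun b0 =>
          v + conjCount nu (b0 + 1) ≤ conjCount lam (b0 + 1) ∧
          conjCount nu (b0 + 1) + v = r0 + 1)).card := by
    funext r0
    exact lr_row_count hlam hnu r0 v hv
  rw [this, lr_sum_list_range]
  simp only [Finset.card_filter]
  rw [Finset.sum_comm]
  apply Finset.sum_congr rfl
  intro b0 _
  by_cases hA : v + conjCount nu (b0 + 1) ≤ conjCount lam (b0 + 1)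
  · have hstep : ∀ r0 ∈ Finset.range (min m lam.length),
        (if v + conjCount nu (b0 + 1) ≤ conjCount lam (b0 + 1) ∧
            conjCount nu (b0 + 1) + v = r0 + 1 then 1 else 0)
        = (if conjCount nu (b0 + 1) + v - 1 = r0 then (1:ℕ) else 0) := by
      intro r0 _
      split_ifs with h1 h2 h2 <;> omega
    rw [Finset.sum_congr rfl hstep, Finset.sum_ite_eq]
    simp only [Finset.mem_range]
    split_ifs <;> omega
  · have hstep : ∀ r0 ∈ Finset.range (min m lam.length),
        (if v + conjCount nu (b0 + 1) ≤ conjCount lam (b0 + 1) ∧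
            conjCount nu (b0 + 1) + v = r0 + 1 then 1 else 0) = (0:ℕ) := by
      intro r0 _
      rw [if_neg (fun h => hA h.1)]
    rw [Finset.sum_congr rfl hstep, Finset.sum_const_zero, if_neg (fun h => hA h.1)]

lemma lr_T0_lattice (hlam : IsPartition lam) (hnu : IsPartition nu) :
    IsLatticeWord (rword lam nu (lrT0 lam nu)) := by
  intro n i hi
  set rows : List (List ℕ) := (List.range lam.length).map (fun a0 =>
      (List.range (part lam (a0 + 1) - part nu (a0 + 1))).map
        (fun k => lrT0 lam nu (a0 + 1) (part lam (a0 + 1) - k))) with hrows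
  have hrw : rword lam nu (lrT0 lam nu) = rows.flatten := rfl
  rw [hrw]
  obtain ⟨a, s, hdec⟩ := lr_take_flatten rows n
  rw [hdec, List.count_append, List.count_append]
  have hrl : rows.length = lam.length := by simp [hrows]
  have hsplit : ∀ v : ℕ, ((rows.take a).flatten).count v + (rows.getD a []).count v
      = ((rows.take (a + 1)).flatten).count v := by
    intro v
    by_cases h : a < rows.length
    · rw [List.take_succ, List.flatten_append, List.count_append]
      congr 1
      have : rows[a]? = some rows[a] := List.getElem?_eq_getElem h
      rw [List.getD_eq_getElem?_getD, this]
      simp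
    · rw [List.getD_eq_default _ _ (by omega), List.take_of_length_le (by omega),
        List.take_of_length_le (by omega)]
      simp
  have key1 : ((rows.take (a + 1)).flatten).count (i + 1)
      ≤ ((rows.take a).flatten).count i := by
    rw [lr_prefix_count hlam hnu (a + 1) (i + 1) (by omega),
      lr_prefix_count hlam hnu a i hi]
    apply Finset.card_le_card
    intro b0 hb0
    simp only [Finset.mem_filter, Finset.mem_range, le_inf_iff] at hb0 ⊢
    omega
  calc ((rows.take a).flatten).count (i + 1) + ((rows.getD a []).take s).count (i + 1)
      ≤ ((rows.take a).flatten).count (i + 1) + (rows.getD a []).count (i + 1) := by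
        have := ((rows.getD a []).take_sublist s).count_le (i + 1)
        omega
    _ = ((rows.take (a + 1)).flatten).count (i + 1) := hsplit (i + 1)
    _ ≤ ((rows.take a).flatten).count i := key1
    _ ≤ ((rows.take a).flatten).count i + ((rows.getD a []).take s).count i := by omega

lemma lr_cell_mem (hlam : IsPartition lam) (hnu : IsPartition nu) {a b : ℕ}
    (h : IsSkewCell lam nu a b) :
    (a, b) ∈ Finset.range (lam.length + 1) ×ˢ Finset.range (lam.headI + 1) := by
  have hc := (lr_skew_iff hlam.1 hnu.1 a b).mp h
  have h1 : conjCount lam b ≤ lam.length := lr_conj_le_length lam b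
  have h2 : b ≤ lam.headI := le_trans h.2.2 (lr_part_le_headI hlam.1 a)
  simp only [Finset.mem_product, Finset.mem_range]
  omega

lemma lr_bound (hlam : IsPartition lam) (hnu : IsPartition nu) (T : ℕ → ℕ → ℕ)
    (hss : IsSSSkewTableau lam nu T)
    (hcnt : ∀ i, 1 ≤ i → entryCount lam nu T i = rhoVal lam nu i)
    {a b : ℕ} (h : IsSkewCell lam nu a b) : T a b ≤ lam.length := by
  have hv1 : 1 ≤ T a b := hss.2.1 a b h
  have hpos : 0 < entryCount lam nu T (T a b) := by
    apply Finset.card_pos.mpr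
    exact ⟨(a, b), Finset.mem_filter.mpr ⟨lr_cell_mem hlam hnu h, h, rfl⟩⟩
  rw [hcnt _ hv1] at hpos
  obtain ⟨j0, hj0⟩ := Finset.card_pos.mp hpos
  simp only [Finset.mem_filter, Finset.mem_range] at hj0
  have := lr_conj_le_length lam (j0 + 1)
  omega

lemma lr_lower (hlam : IsPartition lam) (hnu : IsPartition nu) (T : ℕ → ℕ → ℕ)
    (hss : IsSSSkewTableau lam nu T) :
    ∀ a b, IsSkewCell lam nu a b → a ≤ T a b + conjCount nu b := by
  intro a
  induction a with
  | zero => intro b h; omega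
  | succ a ih =>
    intro b h
    have hc := (lr_skew_iff hlam.1 hnu.1 (a + 1) b).mp h
    by_cases ha : conjCount nu b < a
    · have h' : IsSkewCell lam nu a b :=
        (lr_skew_iff hlam.1 hnu.1 a b).mpr ⟨by omega, by omega, ha, by omega⟩
      have hlt := hss.2.2.2 a b h' h
      have := ih b h'
      omega
    · have h1 := hss.2.1 _ _ h
      omega

lemma lr_sum_eq (hlam : IsPartition lam) (hnu : IsPartition nu) (T : ℕ → ℕ → ℕ)
    (hss : IsSSSkewTableau lam nu T)
    (hcnt : ∀ i, 1 ≤ i → entryCount lam nu T i = rhoVal lam nu i) :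
    ∑ x ∈ (Finset.range (lam.length + 1) ×ˢ Finset.range (lam.headI + 1)).filter
        (fun ab => IsSkewCell lam nu ab.1 ab.2), T x.1 x.2
      = ∑ i ∈ Finset.range (lam.length + 1), i * rhoVal lam nu i := by
  set S := (Finset.range (lam.length + 1) ×ˢ Finset.range (lam.headI + 1)).filter
      (fun ab => IsSkewCell lam nu ab.1 ab.2) with hS
  have hmaps : ∀ x ∈ S, T x.1 x.2 ∈ Finset.range (lam.length + 1) := by
    intro x hx
    rw [hS, Finset.mem_filter] at hx
    simp only [Finset.mem_range]
    have := lr_bound hlam hnu T hss hcnt hx.2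
    omega
  rw [← Finset.sum_fiberwise_of_maps_to hmaps]
  apply Finset.sum_congr rfl
  intro i hi
  have hcard : (S.filter (fun x => T x.1 x.2 = i)).card = entryCount lam nu T i := by
    rw [hS, Finset.filter_filter]
    rfl
  have hconst : ∑ x ∈ S.filter (fun x => T x.1 x.2 = i), T x.1 x.2
      = (S.filter (fun x => T x.1 x.2 = i)).card * i := by
    rw [Finset.sum_congr rfl (fun x hx => (Finset.mem_filter.mp hx).2), Finset.sum_const,
      smul_eq_mul]
  rw [hconst, hcard]
  by_cases hi1 : 1 ≤ i
  · rw [hcnt i hi1, Nat.mul_comm]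
  · have : i = 0 := by omega
    simp [this]

lemma lr_unique (hlam : IsPartition lam) (hnu : IsPartition nu) (T : ℕ → ℕ → ℕ)
    (hss : IsSSSkewTableau lam nu T)
    (hcnt : ∀ i, 1 ≤ i → entryCount lam nu T i = rhoVal lam nu i) :
    T = lrT0 lam nu := by
  set S := (Finset.range (lam.length + 1) ×ˢ Finset.range (lam.headI + 1)).filter
      (fun ab => IsSkewCell lam nu ab.1 ab.2) with hS
  have hle : ∀ x ∈ S, lrT0 lam nu x.1 x.2 ≤ T x.1 x.2 := by
    rintro ⟨a, b⟩ hx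
    rw [hS, Finset.mem_filter] at hx
    have h := hx.2
    have hc := (lr_skew_iff hlam.1 hnu.1 a b).mp h
    have := lr_lower hlam hnu T hss a b h
    rw [lrT0]
    simp only [if_pos h]
    omega
  have hsums : ∑ x ∈ S, lrT0 lam nu x.1 x.2 = ∑ x ∈ S, T x.1 x.2 := by
    rw [lr_sum_eq hlam hnu T hss hcnt,
      lr_sum_eq hlam hnu (lrT0 lam nu) (lr_T0_ss hlam hnu) (fun i hi => lr_T0_count hlam hnu i hi)]
  have heq := (Finset.sum_eq_sum_iff_of_le hle).mp hsums
  funext a b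
  by_cases h : IsSkewCell lam nu a b
  · exact ((heq (a, b) (Finset.mem_filter.mpr ⟨lr_cell_mem hlam hnu h, h⟩)).symm)
  · rw [hss.1 a b h, lrT0, if_neg h]

lemma lr_part_one (p : List ℕ) : part p 1 = p.headI := by
  cases p <;> rfl

end LR

/-- For partitions `ν ⊆ λ`, set `ρ_i = #{j : λ′_j − ν′_j ≥ i}`. Then `ρ` is a
partition of `|λ| − |ν|`, and the Littlewood–Richardson coefficient `c^λ_{νρ}` equals `1`:
there is exactly one semistandard skew tableau of shape `λ/ν` and content `ρ` whose reverse
reading word is a lattice word. -/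
theorem littlewood_richardson_rho_unique (lam nu : List ℕ)
    (hlam : IsPartition lam) (hnu : IsPartition nu) (hsub : ∀ k, part nu k ≤ part lam k) :
    (∀ i, 1 ≤ i → rhoVal lam nu (i + 1) ≤ rhoVal lam nu i) ∧
    (∑ i ∈ Finset.range lam.length, rhoVal lam nu (i + 1)) + nu.sum = lam.sum ∧
    (∃! T : ℕ → ℕ → ℕ, IsSSSkewTableau lam nu T ∧
      (∀ i, 1 ≤ i → entryCount lam nu T i = rhoVal lam nu i) ∧
      IsLatticeWord (rword lam nu T)) := by
  refine ⟨?_, ?_, ?_⟩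
  · intro i hi
    apply Finset.card_le_card
    intro j0 hj0
    simp only [Finset.mem_filter, Finset.mem_range] at hj0 ⊢
    omega
  · have hlamH : ∀ x ∈ lam, x ≤ lam.headI := lr_mem_le_headI hlam.1
    have hnuH : ∀ x ∈ nu, x ≤ lam.headI := by
      intro x hx
      calc x ≤ nu.headI := lr_mem_le_headI hnu.1 x hx
        _ = part nu 1 := (lr_part_one nu).symm
        _ ≤ part lam 1 := hsub 1
        _ ≤ lam.headI := lr_part_le_headI hlam.1 1
    simp only [rhoVal, Finset.card_filter]
    rw [Finset.sum_comm]
    have hinner : ∀ j0 ∈ Finset.range lam.headI,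
        (∑ i ∈ Finset.range lam.length,
          if i + 1 + conjCount nu (j0 + 1) ≤ conjCount lam (j0 + 1) then 1 else 0)
        = conjCount lam (j0 + 1) - conjCount nu (j0 + 1) := by
      intro j0 _
      rw [← Finset.card_filter]
      have h1 := lr_conj_le_length lam (j0 + 1)
      have h2 := lr_conj_mono lam nu hlam.1 hnu.1 hsub (j0 + 1) (by omega)
      have : (Finset.range lam.length).filter
          (fun i => i + 1 + conjCount nu (j0 + 1) ≤ conjCount lam (j0 + 1))
          = Finset.range (conjCount lam (j0 + 1) - conjCount nu (j0 + 1)) := by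
        ext k
        simp only [Finset.mem_filter, Finset.mem_range]
        omega
      rw [this, Finset.card_range]
    rw [Finset.sum_congr rfl hinner, ← lr_sum_conj hnuH, ← lr_sum_conj hlamH,
      ← Finset.sum_add_distrib]
    apply Finset.sum_congr rfl
    intro j0 _
    have h2 := lr_conj_mono lam nu hlam.1 hnu.1 hsub (j0 + 1) (by omega)
    omega
  · refine ⟨lrT0 lam nu, ⟨lr_T0_ss hlam hnu, fun i hi => lr_T0_count hlam hnu i hi,
      lr_T0_lattice hlam hnu⟩, ?_⟩
    rintro T ⟨hss, hcnt, -⟩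
    exact lr_unique hlam hnu T hss hcnt
end
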